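/- arXiv:1404.0653 — 2 statements merged into one kernel-verified Lean document; each statement's English description precedes it below -/
import Mathlib

section
/- Let ℓ ≥ 1 and let λ, μ, ν be partitions of n with at most ℓ parts, and set t = n − ν_1. If |λ_i − μ_i| > t for some index i with 1 ≤ i ≤ ℓ, then g(λ,μ,ν) = 0. -/
open Finset

/-- A partition with at most `ℓ` parts: a weakly decreasing tuple of naturals. -/
def IsPartition {ℓ : ℕ} (lam : Fin ℓ → ℕ) : Prop :=
  ∀ i j : Fin ℓ, i ≤ j → lam j ≤ lam i

/-- The index type for the `3ℓ` variables `x_1,…,x_ℓ,y_1,…,y_ℓ,z_1,…,z_ℓ`. -/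
abbrev KVar (ℓ : ℕ) := Fin ℓ ⊕ (Fin ℓ ⊕ Fin ℓ)

noncomputable section

/-- The variable `x_i`. -/
def Xv (ℓ : ℕ) (i : Fin ℓ) : MvPowerSeries (KVar ℓ) ℤ := MvPowerSeries.X (Sum.inl i)

/-- The variable `y_j`. -/
def Yv (ℓ : ℕ) (j : Fin ℓ) : MvPowerSeries (KVar ℓ) ℤ := MvPowerSeries.X (Sum.inr (Sum.inl j))

/-- The variable `z_k`. -/
def Zv (ℓ : ℕ) (k : Fin ℓ) : MvPowerSeries (KVar ℓ) ℤ := MvPowerSeries.X (Sum.inr (Sum.inr k))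

/-- The Vandermonde product `∏_{i<j} (v i - v j)`. -/
def vdm (ℓ : ℕ) (v : Fin ℓ → MvPowerSeries (KVar ℓ) ℤ) : MvPowerSeries (KVar ℓ) ℤ :=
  ∏ i : Fin ℓ, ∏ j : Fin ℓ, if i < j then v i - v j else 1

/-- The Cauchy kernel `∏_{i,j,k} (1 - x_i y_j z_k)⁻¹`. -/
def cauchyKernel (ℓ : ℕ) : MvPowerSeries (KVar ℓ) ℤ :=
  ∏ i : Fin ℓ, ∏ j : Fin ℓ, ∏ k : Fin ℓ,
    MvPowerSeries.invOfUnit (1 - Xv ℓ i * Yv ℓ j * Zv ℓ k) 1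

/-- The truncated Cauchy kernel `∏_{i,j,k} (1 + x_iy_jz_k + ⋯ + (x_iy_jz_k)^D)`. -/
def truncKernel (ℓ D : ℕ) : MvPowerSeries (KVar ℓ) ℤ :=
  ∏ i : Fin ℓ, ∏ j : Fin ℓ, ∏ k : Fin ℓ,
    ∑ d ∈ Finset.range (D + 1), (Xv ℓ i * Yv ℓ j * Zv ℓ k) ^ d

/-- The exponent vector of the monomial `∏ x_i^{a_i} ∏ y_j^{b_j} ∏ z_k^{c_k}`. -/
def expVec3 (ℓ : ℕ) (a b c : Fin ℓ → ℕ) : KVar ℓ →₀ ℕ :=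
  Finsupp.equivFunOnFinite.symm (Sum.elim a (Sum.elim b c))

/-- The staircase-shifted exponent vector of
`∏ x_i^{λ_i+ℓ-i} ∏ y_j^{μ_j+ℓ-j} ∏ z_k^{ν_k+ℓ-k}` (here `i,j,k` are 0-based). -/
def kronExp (ℓ : ℕ) (lam mu nu : Fin ℓ → ℕ) : KVar ℓ →₀ ℕ :=
  expVec3 ℓ (fun i => lam i + (ℓ - 1 - (i : ℕ))) (fun j => mu j + (ℓ - 1 - (j : ℕ)))
    (fun k => nu k + (ℓ - 1 - (k : ℕ)))

/-- The Kronecker coefficient `g(λ,μ,ν)`, defined as the coefficient of the monomial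
`∏ x_i^{λ_i+ℓ-i} ∏ y_j^{μ_j+ℓ-j} ∏ z_k^{ν_k+ℓ-k}` in
`Δ(x)Δ(y)Δ(z) ∏_{i,j,k} (1-x_iy_jz_k)⁻¹`. -/
def kron (ℓ : ℕ) (lam mu nu : Fin ℓ → ℕ) : ℤ :=
  MvPowerSeries.coeff (kronExp ℓ lam mu nu)
    (vdm ℓ (Xv ℓ) * vdm ℓ (Yv ℓ) * vdm ℓ (Zv ℓ) * cauchyKernel ℓ)

end

noncomputable section Aux

open MvPowerSeries

variable {ℓ : ℕ}


open MvPowerSeries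

variable {ℓ : ℕ}

def xvar (i : Fin ℓ) : KVar ℓ := Sum.inl i
def yvar (j : Fin ℓ) : KVar ℓ := Sum.inr (Sum.inl j)
def zvar (k : Fin ℓ) : KVar ℓ := Sum.inr (Sum.inr k)

open Classical in
def geom (w : KVar ℓ →₀ ℕ) : MvPowerSeries (KVar ℓ) ℤ :=
  fun v => if ∃ n : ℕ, v = n • w then (1 : ℤ) else 0

lemma coeff_geom_one {w v : KVar ℓ →₀ ℕ} (h : ∃ n : ℕ, v = n • w) :
    coeff v (geom w) = 1 := by
  classical
  simp only [coeff_apply, geom]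
  rw [if_pos h]

lemma coeff_geom_zero {w v : KVar ℓ →₀ ℕ} (h : ¬ ∃ n : ℕ, v = n • w) :
    coeff v (geom w) = 0 := by
  classical
  simp only [coeff_apply, geom]
  rw [if_neg h]

lemma geom_inv (w : KVar ℓ →₀ ℕ) (hw : w ≠ 0) :
    (1 - monomial w 1) * geom w = 1 := by
  classical
  ext v
  rw [sub_mul, one_mul, map_sub, coeff_monomial_mul, coeff_one]
  by_cases h0 : v = 0
  · subst h0
    have e1 : coeff (0 : KVar ℓ →₀ ℕ) (geom w) = 1 := coeff_geom_one ⟨0, by simp⟩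
    have e2 : ¬ w ≤ (0 : KVar ℓ →₀ ℕ) := fun hle => hw (le_antisymm hle zero_le)
    rw [e1, if_neg e2, if_pos rfl, sub_zero]
  · rw [if_neg h0]
    by_cases h1 : ∃ n : ℕ, v = n • w
    · obtain ⟨n, rfl⟩ := h1
      match n with
      | 0 => simp at h0
      | n + 1 =>
        have hle : w ≤ (n + 1) • w := by
          rw [succ_nsmul]
          exact le_add_self
        have e1 : coeff ((n + 1) • w) (geom w) = 1 := coeff_geom_one ⟨n + 1, rfl⟩
        have e3 : (n + 1) • w - w = n • w := by
          rw [succ_nsmul, add_tsub_cancel_right]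
        have e2 : coeff ((n + 1) • w - w) (geom w) = 1 := by
          rw [e3]; exact coeff_geom_one ⟨n, rfl⟩
        rw [e1, if_pos hle, e2, mul_one, sub_self]
    · have e1 : coeff v (geom w) = 0 := coeff_geom_zero h1
      rw [e1]
      split_ifs with h2
      · have e2 : coeff (v - w) (geom w) = 0 := by
          apply coeff_geom_zero
          rintro ⟨m, hm⟩
          exact h1 ⟨m + 1, by
            rw [← tsub_add_cancel_of_le h2, hm]
            ext s
            simp only [Finsupp.add_apply, Finsupp.smul_apply, smul_eq_mul]
            ring⟩
        rw [e2, mul_zero, sub_zero]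
      · rw [sub_zero]

lemma invOfUnit_eq_geom (w : KVar ℓ →₀ ℕ) (hw : w ≠ 0) :
    invOfUnit (1 - monomial w 1) 1 = geom w := by
  classical
  have hc : constantCoeff (1 - monomial w 1) = ((1 : ℤˣ) : ℤ) := by
    rw [map_sub, map_one, ← coeff_zero_eq_constantCoeff, coeff_monomial,
      if_neg (by simpa using (Ne.symm hw))]
    simp
  have h1 := mul_invOfUnit (1 - monomial w 1) 1 hc
  calc invOfUnit (1 - monomial w 1) 1
      = ((1 - monomial w 1) * geom w) * invOfUnit (1 - monomial w 1) 1 := by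
        rw [geom_inv w hw, one_mul]
    _ = geom w * ((1 - monomial w 1) * invOfUnit (1 - monomial w 1) 1) := by ring
    _ = geom w := by rw [h1, mul_one]

lemma exists_of_coeff_geom_ne_zero {w v : KVar ℓ →₀ ℕ} (h : coeff v (geom w) ≠ 0) :
    ∃ n : ℕ, v = n • w := by
  by_contra hc
  exact h (coeff_geom_zero hc)

lemma coeff_mul_ne_zero {f g : MvPowerSeries (KVar ℓ) ℤ} {v : KVar ℓ →₀ ℕ}
    (h : coeff v (f * g) ≠ 0) :
    ∃ v₁ v₂, v₁ + v₂ = v ∧ coeff v₁ f ≠ 0 ∧ coeff v₂ g ≠ 0 := by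
  classical
  rw [coeff_mul] at h
  obtain ⟨p, hp, hne⟩ := Finset.exists_ne_zero_of_sum_ne_zero h
  exact ⟨p.1, p.2, Finset.HasAntidiagonal.mem_antidiagonal.mp hp, left_ne_zero_of_mul hne,
    right_ne_zero_of_mul hne⟩

lemma coeff_prod_geom_ne_zero {ι : Type} [DecidableEq ι] {s : Finset ι}
    {w : ι → (KVar ℓ →₀ ℕ)} {v : KVar ℓ →₀ ℕ}
    (h : coeff v (∏ t ∈ s, geom (w t)) ≠ 0) :
    ∃ d : ι → ℕ, v = ∑ t ∈ s, d t • w t := by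
  induction s using Finset.induction_on generalizing v with
  | empty =>
    rw [Finset.prod_empty, coeff_one] at h
    refine ⟨fun _ => 0, ?_⟩
    rw [Finset.sum_empty]
    by_contra hv
    rw [if_neg hv] at h
    exact h rfl
  | @insert a s ha ih =>
    rw [Finset.prod_insert ha] at h
    obtain ⟨v₁, v₂, hv, h1, h2⟩ := coeff_mul_ne_zero h
    obtain ⟨n, rfl⟩ := exists_of_coeff_geom_ne_zero h1
    obtain ⟨d, rfl⟩ := ih h2
    refine ⟨Function.update d a n, ?_⟩
    rw [← hv, Finset.sum_insert ha, Function.update_self]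
    congr 1
    exact (Finset.sum_congr rfl fun t ht => by
      rw [Function.update_of_ne (by rintro rfl; exact ha ht) n d]).symm

lemma prod_monomial_one {ι : Type} (s : Finset ι) (f : ι → (KVar ℓ →₀ ℕ)) :
    ∏ t ∈ s, monomial (f t) (1 : ℤ) = monomial (∑ t ∈ s, f t) 1 := by
  classical
  induction s using Finset.induction_on with
  | empty => simp
  | @insert a s ha ih =>
    rw [Finset.prod_insert ha, Finset.sum_insert ha, ih, monomial_mul_monomial, one_mul]


end Aux

noncomputable section DetAux


variable {ℓ : ℕ} {R : Type*} [CommRing R]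

/-- generic Vandermonde product -/
def vdmP (v : Fin ℓ → R) : R := ∏ i : Fin ℓ, ∏ j ∈ Ioi i, (v i - v j)

def bexp (ℓ : ℕ) : ℕ := ∑ i : Fin ℓ, (i : ℕ)

lemma sum_rev (ℓ : ℕ) : ∑ i : Fin ℓ, (ℓ - 1 - (i : ℕ)) = bexp ℓ := by
  rw [bexp, ← Equiv.sum_comp (Fin.revPerm (n := ℓ)) (fun i : Fin ℓ => (i : ℕ))]
  refine Finset.sum_congr rfl fun i _ => ?_
  simp only [Fin.revPerm_apply, Fin.val_rev]
  omega

lemma sum_card_Ioi (ℓ : ℕ) : ∑ i : Fin ℓ, (Ioi i).card = bexp ℓ := by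
  rw [← sum_rev ℓ]
  exact Finset.sum_congr rfl fun i _ => by rw [Fin.card_Ioi]

lemma vdmP_eq_det (v : Fin ℓ → R) :
    vdmP v = (-1 : R) ^ bexp ℓ * (Matrix.vandermonde v).det := by
  rw [Matrix.det_vandermonde]
  calc vdmP v = ∏ i : Fin ℓ, ∏ j ∈ Ioi i, (-1 * (v j - v i)) := by
        exact Finset.prod_congr rfl fun i _ => Finset.prod_congr rfl fun j _ => by ring
    _ = ∏ i : Fin ℓ, ((-1 : R) ^ (Ioi i).card * ∏ j ∈ Ioi i, (v j - v i)) := by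
        exact Finset.prod_congr rfl fun i _ => by
          rw [Finset.prod_mul_distrib, Finset.prod_const]
    _ = (∏ i : Fin ℓ, (-1 : R) ^ (Ioi i).card) * ∏ i : Fin ℓ, ∏ j ∈ Ioi i, (v j - v i) :=
        Finset.prod_mul_distrib
    _ = (-1 : R) ^ bexp ℓ * ∏ i : Fin ℓ, ∏ j ∈ Ioi i, (v j - v i) := by
        rw [Finset.prod_pow_eq_pow_sum, sum_card_Ioi]

lemma det_eq_vdmP (v : Fin ℓ → R) :
    (Matrix.vandermonde v).det = (-1 : R) ^ bexp ℓ * vdmP v := by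
  have h1 : (-1 : R) ^ (bexp ℓ + bexp ℓ) = 1 := by
    rw [← two_mul, pow_mul]; norm_num
  rw [vdmP_eq_det, ← mul_assoc, ← pow_add, h1, one_mul]

/-- the elementary-symmetric-ish matrix -/
def matA (Y : Fin ℓ → R) : Matrix (Fin ℓ) (Fin ℓ) R :=
  Matrix.of fun m j => ∑ S ∈ powersetCard (m : ℕ) (univ.erase j), ∏ j' ∈ S, Y j'

lemma sum_powerset_fin {M : Type*} [AddCommMonoid M] (j : Fin ℓ) (f : Finset (Fin ℓ) → M) :
    ∑ t ∈ (univ.erase j).powerset, f t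
      = ∑ m : Fin ℓ, ∑ t ∈ powersetCard (m : ℕ) (univ.erase j), f t := by
  rw [Finset.sum_powerset,
    Fin.sum_univ_eq_sum_range (fun r => ∑ t ∈ powersetCard r (univ.erase j), f t)]
  have h : #(univ.erase j) = ℓ - 1 := by
    rw [card_erase_of_mem (mem_univ j), card_univ, Fintype.card_fin]
  rw [h, Nat.sub_add_cancel j.pos]

lemma E_eq_mul (X Y : Fin ℓ → R) (Z : R) :
    (Matrix.of fun i j => ∏ j' ∈ univ.erase j, (1 - X i * Y j' * Z))
      = Matrix.vandermonde X *
        (Matrix.of fun (m j : Fin ℓ) => (-Z) ^ (m : ℕ) * matA Y m j) := by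
  ext i j
  rw [Matrix.mul_apply]
  have lhs : ∏ j' ∈ univ.erase j, (1 - X i * Y j' * Z)
      = ∑ t ∈ (univ.erase j).powerset, ∏ j' ∈ t, (-(X i * Y j' * Z)) := by
    calc ∏ j' ∈ univ.erase j, (1 - X i * Y j' * Z)
        = ∏ j' ∈ univ.erase j, ((-(X i * Y j' * Z)) + 1) := by
          exact Finset.prod_congr rfl fun j' _ => by ring
      _ = ∑ t ∈ (univ.erase j).powerset,
            (∏ j' ∈ t, (-(X i * Y j' * Z))) * ∏ _j' ∈ (univ.erase j) \ t, (1 : R) :=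
          Finset.prod_add _ _ _
      _ = _ := by simp
  rw [Matrix.of_apply, lhs, sum_powerset_fin j]
  refine Finset.sum_congr rfl fun m _ => ?_
  rw [Matrix.of_apply, Matrix.vandermonde_apply, matA, Matrix.of_apply, mul_sum, mul_sum]

  refine Finset.sum_congr rfl fun t ht => ?_
  have hc : #t = (m : ℕ) := (Finset.mem_powersetCard.mp ht).2
  calc ∏ j' ∈ t, (-(X i * Y j' * Z))
      = ∏ j' ∈ t, (X i * ((-Z) * Y j')) := Finset.prod_congr rfl fun j' _ => by ring
    _ = (∏ _j' ∈ t, X i) * ∏ j' ∈ t, ((-Z) * Y j') := Finset.prod_mul_distrib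
    _ = X i ^ (m : ℕ) * ((∏ _j' ∈ t, (-Z)) * ∏ j' ∈ t, Y j') := by
        rw [Finset.prod_mul_distrib, Finset.prod_const, Finset.prod_const, hc]
    _ = X i ^ (m : ℕ) * ((-Z) ^ (m : ℕ) * ∏ j' ∈ t, Y j') := by
        rw [Finset.prod_const, hc]


lemma W_mul_A (Y : Fin ℓ → R) :
    (Matrix.of fun (i m : Fin ℓ) => Y i ^ (ℓ - 1 - (m : ℕ))) *
        (Matrix.of fun (m j : Fin ℓ) => (-1 : R) ^ (m : ℕ) * matA Y m j)
      = Matrix.of fun (i j : Fin ℓ) => ∏ j' ∈ univ.erase j, (Y i - Y j') := by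
  ext i j
  rw [Matrix.mul_apply, Matrix.of_apply]
  have lhs : ∏ j' ∈ univ.erase j, (Y i - Y j')
      = ∑ t ∈ (univ.erase j).powerset, (∏ j' ∈ t, (-(Y j'))) * Y i ^ (ℓ - 1 - #t) := by
    calc ∏ j' ∈ univ.erase j, (Y i - Y j')
        = ∏ j' ∈ univ.erase j, ((-(Y j')) + Y i) := by
          exact Finset.prod_congr rfl fun j' _ => by ring
      _ = ∑ t ∈ (univ.erase j).powerset,
            (∏ j' ∈ t, (-(Y j'))) * ∏ _j' ∈ (univ.erase j) \ t, Y i :=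
          Finset.prod_add _ _ _
      _ = _ := by
          refine Finset.sum_congr rfl fun t ht => ?_
          rw [Finset.prod_const, card_sdiff_of_subset (Finset.mem_powerset.mp ht),
            card_erase_of_mem (mem_univ j), card_univ, Fintype.card_fin]
  rw [lhs, sum_powerset_fin j]
  refine Finset.sum_congr rfl fun m _ => ?_
  rw [Matrix.of_apply, Matrix.of_apply, matA, Matrix.of_apply, Finset.mul_sum, Finset.mul_sum]
  refine Finset.sum_congr rfl fun t ht => ?_
  have hc : #t = (m : ℕ) := (Finset.mem_powersetCard.mp ht).2
  have hneg : ∏ j' ∈ t, (-(Y j')) = (-1 : R) ^ (m : ℕ) * ∏ j' ∈ t, Y j' := by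
    calc ∏ j' ∈ t, (-(Y j')) = ∏ j' ∈ t, ((-1 : R) * Y j') :=
          Finset.prod_congr rfl fun j' _ => by ring
      _ = (∏ _j' ∈ t, (-1 : R)) * ∏ j' ∈ t, Y j' := Finset.prod_mul_distrib
      _ = _ := by rw [Finset.prod_const, hc]
  rw [hneg, hc]
  ring

lemma erase_eq_Iio_union_Ioi (j : Fin ℓ) :
    univ.erase j = Finset.Iio j ∪ Finset.Ioi j := by
  ext j'
  simp only [Finset.mem_erase, Finset.mem_union, Finset.mem_Iio, Finset.mem_Ioi, mem_univ,
    and_true]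
  exact ne_iff_lt_or_gt

lemma prod_erase_eq (g : Fin ℓ → Fin ℓ → R) :
    ∏ j : Fin ℓ, ∏ j' ∈ univ.erase j, g j j'
      = (∏ a : Fin ℓ, ∏ b ∈ Ioi a, g b a) * (∏ a : Fin ℓ, ∏ b ∈ Ioi a, g a b) := by
  have h1 : ∀ j : Fin ℓ, ∏ j' ∈ univ.erase j, g j j'
      = (∏ j' ∈ Iio j, g j j') * ∏ j' ∈ Ioi j, g j j' := by
    intro j
    rw [erase_eq_Iio_union_Ioi, Finset.prod_union]
    exact Finset.disjoint_left.mpr fun a ha ha' => by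
      exact absurd (Finset.mem_Iio.mp ha) (not_lt.mpr (le_of_lt (Finset.mem_Ioi.mp ha')))
  calc ∏ j : Fin ℓ, ∏ j' ∈ univ.erase j, g j j'
      = (∏ j : Fin ℓ, ∏ j' ∈ Iio j, g j j') * ∏ j : Fin ℓ, ∏ j' ∈ Ioi j, g j j' := by
        rw [← Finset.prod_mul_distrib]; exact Finset.prod_congr rfl fun j _ => h1 j
    _ = (∏ a : Fin ℓ, ∏ b ∈ Ioi a, g b a) * ∏ a : Fin ℓ, ∏ b ∈ Ioi a, g a b := by
        congr 1
        exact Finset.prod_comm' fun x y => by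
          simp only [mem_univ, Finset.mem_Iio, Finset.mem_Ioi, true_and, and_true]

lemma det_B (Y : Fin ℓ → R) :
    (Matrix.of fun (i j : Fin ℓ) => ∏ j' ∈ univ.erase j, (Y i - Y j')).det
      = (-1 : R) ^ bexp ℓ * vdmP Y * vdmP Y := by
  have hdiag : (Matrix.of fun (i j : Fin ℓ) => ∏ j' ∈ univ.erase j, (Y i - Y j'))
      = Matrix.diagonal (fun j => ∏ j' ∈ univ.erase j, (Y j - Y j')) := by
    ext i j
    by_cases h : i = j
    · subst h; rw [Matrix.diagonal_apply_eq]; rfl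
    · rw [Matrix.diagonal_apply_ne _ h, Matrix.of_apply]
      exact Finset.prod_eq_zero (Finset.mem_erase.mpr ⟨h, mem_univ i⟩) (sub_self (Y i))
  rw [hdiag, Matrix.det_diagonal]
  calc ∏ j : Fin ℓ, ∏ j' ∈ univ.erase j, (Y j - Y j')
      = (∏ a : Fin ℓ, ∏ b ∈ Ioi a, (Y b - Y a)) * ∏ a : Fin ℓ, ∏ b ∈ Ioi a, (Y a - Y b) :=
        prod_erase_eq _
    _ = ((-1 : R) ^ bexp ℓ * vdmP Y) * vdmP Y := by
        rw [← Matrix.det_vandermonde, det_eq_vdmP, vdmP]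
    _ = _ := by ring


lemma neg_one_pow_sq (b : ℕ) : (-1 : R) ^ b * (-1 : R) ^ b = 1 := by
  rw [← pow_add, ← two_mul, pow_mul]; norm_num

lemma det_matA [NoZeroDivisors R] (Y : Fin ℓ → R) (hY : vdmP Y ≠ 0) :
    (matA Y).det = ((Equiv.Perm.sign (Fin.revPerm (n := ℓ)) : ℤ) : R) * (-1 : R) ^ bexp ℓ
      * vdmP Y := by
  set s : R := ((Equiv.Perm.sign (Fin.revPerm (n := ℓ)) : ℤ) : R) with hs_def
  have hW : (Matrix.of fun (i m : Fin ℓ) => Y i ^ (ℓ - 1 - (m : ℕ)))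
      = (Matrix.vandermonde Y).submatrix id Fin.revPerm := by
    ext i m
    rw [Matrix.of_apply, Matrix.submatrix_apply, Matrix.vandermonde_apply]
    congr 1
    rw [Fin.revPerm_apply, Fin.val_rev]
    omega
  have key := congrArg Matrix.det (W_mul_A Y)
  rw [Matrix.det_mul, hW, Matrix.det_permute', det_B, Matrix.det_mul_column, det_eq_vdmP] at key
  have hprodm : (∏ m : Fin ℓ, (-1 : R) ^ (m : ℕ)) = (-1 : R) ^ bexp ℓ := by
    rw [Finset.prod_pow_eq_pow_sum]; rfl
  rw [hprodm] at key
  have h1 := neg_one_pow_sq (R := R) (bexp ℓ)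
  -- key : s * ((-1)^b * vdmP Y) * ((-1)^b * (matA Y).det) = (-1)^b * vdmP Y * vdmP Y
  have key2 : vdmP Y * (s * (matA Y).det) = vdmP Y * ((-1 : R) ^ bexp ℓ * vdmP Y) := by
    calc vdmP Y * (s * (matA Y).det)
        = vdmP Y * (s * (matA Y).det) * ((-1 : R) ^ bexp ℓ * (-1 : R) ^ bexp ℓ) := by
          rw [h1, mul_one]
      _ = s * ((-1 : R) ^ bexp ℓ * vdmP Y) * ((-1 : R) ^ bexp ℓ * (matA Y).det) := by ring
      _ = (-1 : R) ^ bexp ℓ * vdmP Y * vdmP Y := key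
      _ = vdmP Y * ((-1 : R) ^ bexp ℓ * vdmP Y) := by ring
  have key3 := mul_left_cancel₀ hY key2
  have hss : s * s = 1 := by
    have hu := Int.units_mul_self (Equiv.Perm.sign (Fin.revPerm (n := ℓ)))
    rw [hs_def, ← Int.cast_mul, ← Units.val_mul, hu]
    simp
  calc (matA Y).det = (s * s) * (matA Y).det := by rw [hss, one_mul]
    _ = s * (s * (matA Y).det) := by ring
    _ = s * ((-1 : R) ^ bexp ℓ * vdmP Y) := by rw [key3]
    _ = s * (-1 : R) ^ bexp ℓ * vdmP Y := by ring

lemma det_E [NoZeroDivisors R] (X Y : Fin ℓ → R) (Z : R) (hY : vdmP Y ≠ 0) :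
    (Matrix.of fun (i j : Fin ℓ) => ∏ j' ∈ univ.erase j, (1 - X i * Y j' * Z)).det
      = (((Equiv.Perm.sign (Fin.revPerm (n := ℓ)) : ℤ) : R) * (-1 : R) ^ bexp ℓ) *
          (Z ^ bexp ℓ * (vdmP X * vdmP Y)) := by
  rw [E_eq_mul X Y Z, Matrix.det_mul, det_eq_vdmP, Matrix.det_mul_column, det_matA Y hY]
  have hprod : (∏ m : Fin ℓ, (-Z) ^ (m : ℕ)) = (-1 : R) ^ bexp ℓ * Z ^ bexp ℓ := by
    calc ∏ m : Fin ℓ, (-Z) ^ (m : ℕ)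
        = ∏ m : Fin ℓ, ((-1 : R) ^ (m : ℕ) * Z ^ (m : ℕ)) :=
          Finset.prod_congr rfl fun m _ => by rw [neg_pow]
      _ = (∏ m : Fin ℓ, (-1 : R) ^ (m : ℕ)) * ∏ m : Fin ℓ, Z ^ (m : ℕ) :=
          Finset.prod_mul_distrib
      _ = _ := by rw [Finset.prod_pow_eq_pow_sum, Finset.prod_pow_eq_pow_sum]; rfl
  rw [hprod]
  have h1 := neg_one_pow_sq (R := R) (bexp ℓ)
  set s : R := ((Equiv.Perm.sign (Fin.revPerm (n := ℓ)) : ℤ) : R)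
  linear_combination (s * (-1 : R) ^ bexp ℓ * Z ^ bexp ℓ * vdmP X * vdmP Y) * h1


end DetAux


noncomputable section Assembly

open MvPowerSeries

variable {ℓ : ℕ}

/-- the exponent vector of `x_i y_j z_k` -/
def wfac (i j k : Fin ℓ) : KVar ℓ →₀ ℕ :=
  Finsupp.single (xvar i) 1 + Finsupp.single (yvar j) 1 + Finsupp.single (zvar k) 1

lemma wfac_apply_x (i j k i' : Fin ℓ) :
    wfac i j k (xvar i') = if i = i' then 1 else 0 := by
  simp [wfac, xvar, yvar, zvar, Finsupp.single_apply]

lemma wfac_apply_y (i j k j' : Fin ℓ) :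
    wfac i j k (yvar j') = if j = j' then 1 else 0 := by
  simp [wfac, xvar, yvar, zvar, Finsupp.single_apply]

lemma wfac_apply_z (i j k k' : Fin ℓ) :
    wfac i j k (zvar k') = if k = k' then 1 else 0 := by
  simp [wfac, xvar, yvar, zvar, Finsupp.single_apply]

lemma wfac_ne (i j k : Fin ℓ) : wfac i j k ≠ 0 := by
  intro h
  have h2 : wfac i j k (xvar i) = 0 := by rw [h]; rfl
  rw [wfac_apply_x, if_pos rfl] at h2
  simp at h2

lemma xyz_eq_monomial (i j k : Fin ℓ) :
    Xv ℓ i * Yv ℓ j * Zv ℓ k = monomial (wfac i j k) 1 := by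
  rw [Xv, Yv, Zv, X_def, X_def, X_def, monomial_mul_monomial, monomial_mul_monomial, wfac]
  norm_num
  rfl

lemma invOfUnit_xyz (i j k : Fin ℓ) :
    invOfUnit (1 - Xv ℓ i * Yv ℓ j * Zv ℓ k) 1 = geom (wfac i j k) := by
  rw [xyz_eq_monomial, invOfUnit_eq_geom _ (wfac_ne i j k)]

/-- the remainder product over slices `k ≠ z₀` -/
def PK (z₀ : Fin ℓ) : MvPowerSeries (KVar ℓ) ℤ :=
  ∏ t ∈ (univ.erase z₀) ×ˢ ((univ : Finset (Fin ℓ)) ×ˢ univ), geom (wfac t.2.1 t.2.2 t.1)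

lemma kernel_eq (z₀ : Fin ℓ) :
    cauchyKernel ℓ = (∏ i : Fin ℓ, ∏ j : Fin ℓ, geom (wfac i j z₀)) * PK z₀ := by
  have h1 : cauchyKernel ℓ = ∏ k : Fin ℓ, ∏ i : Fin ℓ, ∏ j : Fin ℓ, geom (wfac i j k) := by
    rw [cauchyKernel]
    rw [show (∏ i : Fin ℓ, ∏ j : Fin ℓ, ∏ k : Fin ℓ,
        invOfUnit (1 - Xv ℓ i * Yv ℓ j * Zv ℓ k) 1)
        = ∏ i : Fin ℓ, ∏ j : Fin ℓ, ∏ k : Fin ℓ, geom (wfac i j k) from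
      Finset.prod_congr rfl fun i _ => Finset.prod_congr rfl fun j _ =>
        Finset.prod_congr rfl fun k _ => invOfUnit_xyz i j k]
    rw [show (∏ i : Fin ℓ, ∏ j : Fin ℓ, ∏ k : Fin ℓ, geom (wfac i j k))
        = ∏ i : Fin ℓ, ∏ k : Fin ℓ, ∏ j : Fin ℓ, geom (wfac i j k) from
      Finset.prod_congr rfl fun i _ => Finset.prod_comm]
    exact Finset.prod_comm
  rw [h1, ← Finset.mul_prod_erase univ _ (mem_univ z₀)]
  congr 1
  rw [PK, Finset.prod_product]
  exact Finset.prod_congr rfl fun k _ => by rw [Finset.prod_product]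

/-- the Cauchy-determinant matrix of geometric series -/
def matD (z₀ : Fin ℓ) : Matrix (Fin ℓ) (Fin ℓ) (MvPowerSeries (KVar ℓ) ℤ) :=
  Matrix.of fun i j => geom (wfac i j z₀)

/-- the overall sign -/
def eta (ℓ : ℕ) : ℤ := (Equiv.Perm.sign (Fin.revPerm (n := ℓ)) : ℤ) * (-1) ^ bexp ℓ

lemma eta_sq (ℓ : ℕ) : eta ℓ * eta ℓ = 1 := by
  rw [eta]
  have hu := Int.units_mul_self (Equiv.Perm.sign (Fin.revPerm (n := ℓ)))
  have : ((Equiv.Perm.sign (Fin.revPerm (n := ℓ)) : ℤ))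
      * ((Equiv.Perm.sign (Fin.revPerm (n := ℓ)) : ℤ)) = 1 := by
    rw [← Units.val_mul, hu]; rfl
  have h2 : ((-1 : ℤ) ^ bexp ℓ) * ((-1 : ℤ) ^ bexp ℓ) = 1 := neg_one_pow_sq (bexp ℓ)
  nlinarith [this, h2]

lemma vdm_eq_vdmP (v : Fin ℓ → MvPowerSeries (KVar ℓ) ℤ) : vdm ℓ v = vdmP v := by
  rw [vdm, vdmP]
  refine Finset.prod_congr rfl fun i _ => ?_
  rw [← Finset.prod_filter]
  congr 1
  ext j
  simp [Finset.mem_Ioi, Finset.mem_filter]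

lemma vdmP_Yv_ne : vdmP (Yv ℓ) ≠ 0 := by
  rw [vdmP]
  refine Finset.prod_ne_zero_iff.mpr fun i _ => Finset.prod_ne_zero_iff.mpr fun j hj => ?_
  intro h
  have hij : i ≠ j := ne_of_lt (Finset.mem_Ioi.mp hj)
  have := congrArg (coeff (Finsupp.single (yvar i) 1)) h
  rw [map_sub, coeff_zero, Yv, Yv, coeff_X, coeff_X] at this
  simp [yvar, hij] at this
  have hs : ¬ ((Finsupp.single (Sum.inr (Sum.inl i)) 1 : KVar ℓ →₀ ℕ)
      = Finsupp.single (Sum.inr (Sum.inl j)) 1) := by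
    intro hs
    have h3 := Finsupp.single_left_injective (α := KVar ℓ) (one_ne_zero (α := ℕ)) hs
    exact hij (by simpa using h3)
  simp [hs] at this

lemma main_identity (z₀ : Fin ℓ) :
    ((eta ℓ : ℤ) : MvPowerSeries (KVar ℓ) ℤ)
        * ((Zv ℓ z₀) ^ bexp ℓ *
          (vdm ℓ (Xv ℓ) * vdm ℓ (Yv ℓ) * vdm ℓ (Zv ℓ) * cauchyKernel ℓ))
      = (matD z₀).det * vdm ℓ (Zv ℓ) * PK z₀ := by
  classical
  set R := MvPowerSeries (KVar ℓ) ℤ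
  -- E-matrix and its relation to matD
  have hE : (Matrix.of fun (i j : Fin ℓ) =>
        ∏ j' ∈ univ.erase j, (1 - Xv ℓ i * Yv ℓ j' * Zv ℓ z₀))
      = Matrix.of fun (i j : Fin ℓ) =>
          (∏ j' : Fin ℓ, (1 - Xv ℓ i * Yv ℓ j' * Zv ℓ z₀)) * matD z₀ i j := by
    ext i j
    rw [Matrix.of_apply, Matrix.of_apply, ← Finset.mul_prod_erase univ _ (mem_univ j)]
    rw [show matD z₀ i j = geom (wfac i j z₀) from rfl]
    rw [mul_comm (1 - Xv ℓ i * Yv ℓ j * Zv ℓ z₀), mul_assoc, xyz_eq_monomial,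
      geom_inv _ (wfac_ne i j z₀), mul_one]
  have hdetE := congrArg Matrix.det hE
  rw [det_E (Xv ℓ) (Yv ℓ) (Zv ℓ z₀) vdmP_Yv_ne, Matrix.det_mul_column] at hdetE
  -- now: η' * (Z^b * (vdmP X * vdmP Y)) = (∏ r) * det (matD z₀)
  have hcast : ((eta ℓ : ℤ) : R)
      = ((Equiv.Perm.sign (Fin.revPerm (n := ℓ)) : ℤ) : R) * (-1 : R) ^ bexp ℓ := by
    rw [eta, Int.cast_mul, Int.cast_pow, Int.cast_neg, Int.cast_one]
  have hker := kernel_eq z₀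
  have hG : (∏ i : Fin ℓ, (∏ j' : Fin ℓ, (1 - Xv ℓ i * Yv ℓ j' * Zv ℓ z₀)))
      * (∏ i : Fin ℓ, ∏ j : Fin ℓ, geom (wfac i j z₀)) = 1 := by
    rw [← Finset.prod_mul_distrib]
    refine Finset.prod_eq_one fun i _ => ?_
    rw [← Finset.prod_mul_distrib]
    refine Finset.prod_eq_one fun j _ => ?_
    rw [xyz_eq_monomial, geom_inv _ (wfac_ne i j z₀)]
  calc ((eta ℓ : ℤ) : R) * ((Zv ℓ z₀) ^ bexp ℓ *
          (vdm ℓ (Xv ℓ) * vdm ℓ (Yv ℓ) * vdm ℓ (Zv ℓ) * cauchyKernel ℓ))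
      = (((Equiv.Perm.sign (Fin.revPerm (n := ℓ)) : ℤ) : R) * (-1 : R) ^ bexp ℓ *
          ((Zv ℓ z₀) ^ bexp ℓ * (vdmP (Xv ℓ) * vdmP (Yv ℓ))))
          * vdm ℓ (Zv ℓ) *
          ((∏ i : Fin ℓ, ∏ j : Fin ℓ, geom (wfac i j z₀)) * PK z₀) := by
        rw [hcast, ← hker, vdm_eq_vdmP (Xv ℓ), vdm_eq_vdmP (Yv ℓ)]; ring
    _ = ((∏ i : Fin ℓ, (∏ j' : Fin ℓ, (1 - Xv ℓ i * Yv ℓ j' * Zv ℓ z₀))) * (matD z₀).det)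
          * vdm ℓ (Zv ℓ) *
          ((∏ i : Fin ℓ, ∏ j : Fin ℓ, geom (wfac i j z₀)) * PK z₀) := by rw [← hdetE]
    _ = ((∏ i : Fin ℓ, (∏ j' : Fin ℓ, (1 - Xv ℓ i * Yv ℓ j' * Zv ℓ z₀)))
          * (∏ i : Fin ℓ, ∏ j : Fin ℓ, geom (wfac i j z₀)))
          * ((matD z₀).det * vdm ℓ (Zv ℓ) * PK z₀) := by ring
    _ = (matD z₀).det * vdm ℓ (Zv ℓ) * PK z₀ := by rw [hG, one_mul]

/-- exponent of the Vandermonde monomial in `z` -/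
def uexp (σ : Equiv.Perm (Fin ℓ)) : KVar ℓ →₀ ℕ :=
  ∑ k : Fin ℓ, Finsupp.single (zvar (σ k)) (k : ℕ)

lemma prod_vand_z (σ : Equiv.Perm (Fin ℓ)) :
    (∏ k : Fin ℓ, (Matrix.vandermonde (Zv ℓ)) (σ k) k) = monomial (uexp σ) 1 := by
  rw [uexp, ← prod_monomial_one]
  refine Finset.prod_congr rfl fun k _ => ?_
  rw [Matrix.vandermonde_apply]
  exact X_pow_eq (zvar (σ k)) (k : ℕ)

lemma expand_det_vdm (z₀ : Fin ℓ) :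
    (matD z₀).det * vdm ℓ (Zv ℓ) * PK z₀
      = ∑ ρ : Equiv.Perm (Fin ℓ), ∑ σ : Equiv.Perm (Fin ℓ),
          ((Equiv.Perm.sign ρ : ℤ) * (Equiv.Perm.sign σ : ℤ) * (-1) ^ bexp ℓ) •
            (monomial (uexp σ) 1 *
              ((∏ i : Fin ℓ, geom (wfac (ρ i) i z₀)) * PK z₀)) := by
  rw [Matrix.det_apply, vdm_eq_vdmP, vdmP_eq_det, Matrix.det_apply]
  rw [Finset.sum_mul, Finset.sum_mul]
  refine Finset.sum_congr rfl fun ρ _ => ?_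
  rw [Finset.mul_sum, Finset.mul_sum, Finset.sum_mul]
  refine Finset.sum_congr rfl fun σ _ => ?_
  rw [prod_vand_z σ]
  have hT : (∏ i : Fin ℓ, matD z₀ (ρ i) i) = ∏ i : Fin ℓ, geom (wfac (ρ i) i z₀) := rfl
  rw [hT]
  simp only [Units.smul_def, zsmul_eq_mul]
  push_cast
  ring

lemma sum_smul_apply {ι : Type} (s : Finset ι) (d : ι → ℕ) (w : ι → (KVar ℓ →₀ ℕ))
    (x : KVar ℓ) : (∑ t ∈ s, d t • w t) x = ∑ t ∈ s, d t * (w t x) := by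
  rw [Finsupp.finset_sum_apply]
  exact Finset.sum_congr rfl fun t _ => by rw [Finsupp.smul_apply, smul_eq_mul]

lemma kronExp_x (lam mu nu : Fin ℓ → ℕ) (i' : Fin ℓ) :
    kronExp ℓ lam mu nu (xvar i') = lam i' + (ℓ - 1 - (i' : ℕ)) := by
  simp [kronExp, expVec3, xvar]

lemma kronExp_y (lam mu nu : Fin ℓ → ℕ) (j' : Fin ℓ) :
    kronExp ℓ lam mu nu (yvar j') = mu j' + (ℓ - 1 - (j' : ℕ)) := by
  simp [kronExp, expVec3, yvar]

lemma kronExp_z (lam mu nu : Fin ℓ → ℕ) (k' : Fin ℓ) :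
    kronExp ℓ lam mu nu (zvar k') = nu k' + (ℓ - 1 - (k' : ℕ)) := by
  simp [kronExp, expVec3, zvar]

lemma uexp_x (σ : Equiv.Perm (Fin ℓ)) (i' : Fin ℓ) : uexp σ (xvar i') = 0 := by
  rw [uexp, Finsupp.finset_sum_apply]
  exact Finset.sum_eq_zero fun k _ => by simp [Finsupp.single_apply, zvar, xvar]

lemma uexp_y (σ : Equiv.Perm (Fin ℓ)) (j' : Fin ℓ) : uexp σ (yvar j') = 0 := by
  rw [uexp, Finsupp.finset_sum_apply]
  exact Finset.sum_eq_zero fun k _ => by simp [Finsupp.single_apply, zvar, yvar]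

lemma uexp_z (σ : Equiv.Perm (Fin ℓ)) (k' : Fin ℓ) :
    uexp σ (zvar k') = ((σ.symm k' : Fin ℓ) : ℕ) := by
  rw [uexp, Finsupp.finset_sum_apply]
  have h : ∀ k : Fin ℓ, (Finsupp.single (zvar (σ k)) (k : ℕ)) (zvar k')
      = if k = σ.symm k' then (k : ℕ) else 0 := by
    intro k
    rw [Finsupp.single_apply]
    congr 1
    simp only [zvar, Sum.inr.injEq, eq_iff_iff]
    exact ⟨fun h => by rw [← h, Equiv.symm_apply_apply], fun h => by rw [h, Equiv.apply_symm_apply]⟩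
  rw [Finset.sum_congr rfl fun k _ => h k, Finset.sum_ite_eq' univ (σ.symm k') _,
    if_pos (mem_univ _)]

lemma core_vanish (hℓ : 1 ≤ ℓ) (lam mu nu : Fin ℓ → ℕ) (n : ℕ)
    (hlam : IsPartition lam) (hmu : IsPartition mu)
    (hlsum : ∑ i, lam i = n) (hmsum : ∑ i, mu i = n) (hnsum : ∑ i, nu i = n)
    (i : Fin ℓ)
    (hi : ((n : ℤ) - (nu ⟨0, hℓ⟩ : ℤ)) < |(lam i : ℤ) - (mu i : ℤ)|)
    (ρ σ : Equiv.Perm (Fin ℓ)) :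
    coeff (kronExp ℓ lam mu nu + Finsupp.single (zvar (⟨0, hℓ⟩ : Fin ℓ)) (bexp ℓ))
      (monomial (uexp σ) 1 *
        ((∏ i' : Fin ℓ, geom (wfac (ρ i') i' ⟨0, hℓ⟩)) * PK (⟨0, hℓ⟩ : Fin ℓ))) = 0 := by
  classical
  set z₀ : Fin ℓ := ⟨0, hℓ⟩ with hz₀
  set V₀ : KVar ℓ →₀ ℕ := kronExp ℓ lam mu nu + Finsupp.single (zvar z₀) (bexp ℓ) with hV₀def
  rw [coeff_monomial_mul]
  split_ifs with hle
  swap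
  · rfl
  rw [one_mul]
  by_contra hne
  obtain ⟨v₁, v₂, hv, h1, h2⟩ := coeff_mul_ne_zero hne
  obtain ⟨d, hd⟩ := coeff_prod_geom_ne_zero (s := univ)
    (w := fun i' => wfac (ρ i') i' z₀) h1
  rw [PK] at h2
  obtain ⟨a, ha⟩ := coeff_prod_geom_ne_zero
    (s := (univ.erase z₀) ×ˢ ((univ : Finset (Fin ℓ)) ×ˢ univ))
    (w := fun t => wfac t.2.1 t.2.2 t.1) h2
  have hVsum : v₁ + v₂ + uexp σ = V₀ := by
    rw [hv]
    exact tsub_add_cancel_of_le hle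
  set bigset := (univ.erase z₀) ×ˢ ((univ : Finset (Fin ℓ)) ×ˢ (univ : Finset (Fin ℓ))) with hbig
  set T : ℕ := ∑ t ∈ bigset, a t with hTdef
  set δf : Fin ℓ → ℕ := fun j => ℓ - 1 - (j : ℕ) with hδf
  set Ax : Fin ℓ → ℕ := fun i' => ∑ t ∈ bigset, a t * (if t.2.1 = i' then 1 else 0) with hAxd
  set Ay : Fin ℓ → ℕ := fun j' => ∑ t ∈ bigset, a t * (if t.2.2 = j' then 1 else 0) with hAyd
  set Az : Fin ℓ → ℕ := fun k' => ∑ t ∈ bigset, a t * (if t.1 = k' then 1 else 0) with hAzd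
  have hv2x : ∀ i', v₂ (xvar i') = Ax i' := fun i' => by
    rw [ha, sum_smul_apply]
    exact Finset.sum_congr rfl fun t _ => by rw [wfac_apply_x]
  have hv2y : ∀ j', v₂ (yvar j') = Ay j' := fun j' => by
    rw [ha, sum_smul_apply]
    exact Finset.sum_congr rfl fun t _ => by rw [wfac_apply_y]
  have hv2z : ∀ k', v₂ (zvar k') = Az k' := fun k' => by
    rw [ha, sum_smul_apply]
    exact Finset.sum_congr rfl fun t _ => by rw [wfac_apply_z]
  have hv1x : ∀ i', v₁ (xvar i') = d (ρ.symm i') := fun i' => by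
    rw [hd, sum_smul_apply]
    have h : ∀ i'' : Fin ℓ, d i'' * (wfac (ρ i'') i'' z₀ (xvar i'))
        = if i'' = ρ.symm i' then d i'' else 0 := by
      intro i''
      rw [wfac_apply_x, mul_ite, mul_one, mul_zero]
      congr 1
      simp only [eq_iff_iff]
      exact ⟨fun h => by rw [← h, Equiv.symm_apply_apply],
        fun h => by rw [h, Equiv.apply_symm_apply]⟩
    rw [Finset.sum_congr rfl fun i'' _ => h i'', Finset.sum_ite_eq' univ (ρ.symm i') _,
      if_pos (mem_univ _)]
  have hv1y : ∀ j', v₁ (yvar j') = d j' := fun j' => by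
    rw [hd, sum_smul_apply]
    have h : ∀ i'' : Fin ℓ, d i'' * (wfac (ρ i'') i'' z₀ (yvar j'))
        = if i'' = j' then d i'' else 0 := by
      intro i''
      rw [wfac_apply_y, mul_ite, mul_one, mul_zero]
    rw [Finset.sum_congr rfl fun i'' _ => h i'', Finset.sum_ite_eq' univ j' _,
      if_pos (mem_univ _)]
  have hv1z : ∀ k', z₀ ≠ k' → v₁ (zvar k') = 0 := fun k' hk' => by
    rw [hd, sum_smul_apply]
    exact Finset.sum_eq_zero fun i'' _ => by rw [wfac_apply_z, if_neg hk', mul_zero]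
  have hzx : ∀ i' : Fin ℓ, (Finsupp.single (zvar z₀) (bexp ℓ)) (xvar i') = 0 := fun i' => by
    rw [Finsupp.single_apply, if_neg]
    simp [zvar, xvar]
  have hzy : ∀ j' : Fin ℓ, (Finsupp.single (zvar z₀) (bexp ℓ)) (yvar j') = 0 := fun j' => by
    rw [Finsupp.single_apply, if_neg]
    simp [zvar, yvar]
  have hV0x : ∀ i', V₀ (xvar i') = lam i' + δf i' := fun i' => by
    rw [hV₀def, Finsupp.add_apply, kronExp_x, hzx, add_zero]
  have hV0y : ∀ j', V₀ (yvar j') = mu j' + δf j' := fun j' => by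
    rw [hV₀def, Finsupp.add_apply, kronExp_y, hzy, add_zero]
  have hV0z : ∀ k', z₀ ≠ k' → V₀ (zvar k') = nu k' + δf k' := fun k' hk' => by
    rw [hV₀def, Finsupp.add_apply, kronExp_z, Finsupp.single_apply, if_neg, add_zero]
    simp only [zvar, ne_eq, Sum.inr.injEq]
    exact fun h => hk' (by exact_mod_cast h)
  have Fx : ∀ i', lam i' + δf i' = d (ρ.symm i') + Ax i' := by
    intro i'
    have h := congrArg (fun f : KVar ℓ →₀ ℕ => f (xvar i')) hVsum
    simp only [Finsupp.add_apply] at h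
    rw [hv1x, hv2x, uexp_x, hV0x] at h
    omega
  have Fy : ∀ j', mu j' + δf j' = d j' + Ay j' := by
    intro j'
    have h := congrArg (fun f : KVar ℓ →₀ ℕ => f (yvar j')) hVsum
    simp only [Finsupp.add_apply] at h
    rw [hv1y, hv2y, uexp_y, hV0y] at h
    omega
  have Fz : ∀ k', z₀ ≠ k' → nu k' + δf k' = Az k' + ((σ.symm k' : Fin ℓ) : ℕ) := by
    intro k' hk'
    have h := congrArg (fun f : KVar ℓ →₀ ℕ => f (zvar k')) hVsum
    simp only [Finsupp.add_apply] at h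
    rw [hv1z k' hk', hv2z, uexp_z, hV0z k' hk'] at h
    omega
  have hAxT : ∀ i', Ax i' ≤ T := by
    intro i'
    refine Finset.sum_le_sum fun t _ => ?_
    split_ifs <;> simp
  have hAyT : ∀ j', Ay j' ≤ T := by
    intro j'
    refine Finset.sum_le_sum fun t _ => ?_
    split_ifs <;> simp
  have hAzsum : ∑ k' ∈ univ.erase z₀, Az k' = T := by
    rw [hTdef]
    rw [show (∑ k' ∈ univ.erase z₀, Az k')
        = ∑ t ∈ bigset, ∑ k' ∈ univ.erase z₀, a t * (if t.1 = k' then 1 else 0) from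
      Finset.sum_comm]
    refine Finset.sum_congr rfl fun t ht => ?_
    rw [← Finset.mul_sum, Finset.sum_ite_eq (univ.erase z₀) t.1 (fun _ => 1),
      if_pos (Finset.mem_product.mp ht).1, mul_one]
  have hTbound : T + nu z₀ ≤ n := by
    have hA0 : ∑ k' : Fin ℓ, (nu k' + δf k') = n + bexp ℓ := by
      rw [Finset.sum_add_distrib, hnsum]
      have : ∑ k' : Fin ℓ, δf k' = bexp ℓ := sum_rev ℓ
      rw [this]
    have hA : nu z₀ + δf z₀ + ∑ k' ∈ univ.erase z₀, (nu k' + δf k') = n + bexp ℓ := by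
      rw [← hA0, ← Finset.add_sum_erase _ (fun k' => nu k' + δf k') (mem_univ z₀)]
    have hB0 : ∑ k' : Fin ℓ, ((σ.symm k' : Fin ℓ) : ℕ) = bexp ℓ := by
      rw [bexp]
      exact Equiv.sum_comp σ.symm (fun k : Fin ℓ => (k : ℕ))
    have hB : ((σ.symm z₀ : Fin ℓ) : ℕ) + ∑ k' ∈ univ.erase z₀, ((σ.symm k' : Fin ℓ) : ℕ)
        = bexp ℓ := by
      rw [← hB0, ← Finset.add_sum_erase _ (fun k' => ((σ.symm k' : Fin ℓ) : ℕ)) (mem_univ z₀)]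
    have hC : ∑ k' ∈ univ.erase z₀, (nu k' + δf k')
        = T + ∑ k' ∈ univ.erase z₀, ((σ.symm k' : Fin ℓ) : ℕ) := by
      rw [← hAzsum, ← Finset.sum_add_distrib]
      exact Finset.sum_congr rfl fun k' hk' =>
        Fz k' (Ne.symm (Finset.mem_erase.mp hk').1)
    have hD : ((σ.symm z₀ : Fin ℓ) : ℕ) ≤ ℓ - 1 := by
      have := (σ.symm z₀).isLt
      omega
    have hE : δf z₀ = ℓ - 1 := by
      have h0 : (z₀ : ℕ) = 0 := rfl
      simp only [hδf]
      omega
    omega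
  rcases lt_abs.mp hi with hcase | hcase
  · have key : ∀ j : Fin ℓ, j ≤ i → ρ.symm j < i := by
      intro j hj
      by_contra hni
      push_neg at hni
      have h1 := Fx j
      have h2 := Fy (ρ.symm j)
      have h3 := hAxT j
      have h4 : lam i ≤ lam j := hlam j i hj
      have h5 : mu (ρ.symm j) ≤ mu i := hmu i (ρ.symm j) hni
      have h6 : δf (ρ.symm j) ≤ δf i := by
        simp only [hδf]
        have : (i : ℕ) ≤ ((ρ.symm j : Fin ℓ) : ℕ) := hni
        omega
      have h7 : δf i ≤ δf j := by
        simp only [hδf]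
        have : (j : ℕ) ≤ (i : ℕ) := hj
        omega
      omega
    have hmapsto : ∀ j ∈ Finset.Iic i, ρ.symm j ∈ Finset.Iio i := fun j hj =>
      Finset.mem_Iio.mpr (key j (Finset.mem_Iic.mp hj))
    have hcard := Finset.card_le_card_of_injOn _ hmapsto (ρ.symm.injective.injOn)
    rw [Fin.card_Iic, Fin.card_Iio] at hcard
    omega
  · have key : ∀ j : Fin ℓ, j ≤ i → ρ j < i := by
      intro j hj
      by_contra hni
      push_neg at hni
      have h1 := Fy j
      have h2 := Fx (ρ j)
      rw [Equiv.symm_apply_apply] at h2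
      have h3 := hAyT j
      have h4 : mu i ≤ mu j := hmu j i hj
      have h5 : lam (ρ j) ≤ lam i := hlam i (ρ j) hni
      have h6 : δf (ρ j) ≤ δf i := by
        simp only [hδf]
        have : (i : ℕ) ≤ ((ρ j : Fin ℓ) : ℕ) := hni
        omega
      have h7 : δf i ≤ δf j := by
        simp only [hδf]
        have : (j : ℕ) ≤ (i : ℕ) := hj
        omega
      omega
    have hmapsto : ∀ j ∈ Finset.Iic i, ρ j ∈ Finset.Iio i := fun j hj =>
      Finset.mem_Iio.mpr (key j (Finset.mem_Iic.mp hj))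
    have hcard := Finset.card_le_card_of_injOn _ hmapsto (ρ.injective.injOn)
    rw [Fin.card_Iic, Fin.card_Iio] at hcard
    omega

end Assembly



/-- if `|λ_i - μ_i| > t = n - ν₁` for some `i`, then `g(λ,μ,ν) = 0`. -/
theorem stmt0 (ℓ n : ℕ) (hℓ : 1 ≤ ℓ)
    (lam mu nu : Fin ℓ → ℕ)
    (hlam : IsPartition lam) (hmu : IsPartition mu) (hnu : IsPartition nu)
    (hlsum : ∑ i, lam i = n) (hmsum : ∑ i, mu i = n) (hnsum : ∑ i, nu i = n)
    (i : Fin ℓ)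
    (hi : ((n : ℤ) - (nu ⟨0, hℓ⟩ : ℤ)) < |(lam i : ℤ) - (mu i : ℤ)|) :
    kron ℓ lam mu nu = 0 := by
  classical
  have hzmon : (Zv ℓ (⟨0, hℓ⟩ : Fin ℓ)) ^ bexp ℓ
      = MvPowerSeries.monomial (Finsupp.single (zvar (⟨0, hℓ⟩ : Fin ℓ)) (bexp ℓ)) 1 :=
    MvPowerSeries.X_pow_eq (zvar (⟨0, hℓ⟩ : Fin ℓ)) (bexp ℓ)
  have step1 : MvPowerSeries.coeff
      (kronExp ℓ lam mu nu + Finsupp.single (zvar (⟨0, hℓ⟩ : Fin ℓ)) (bexp ℓ))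
      (((eta ℓ : ℤ) : MvPowerSeries (KVar ℓ) ℤ) *
        ((Zv ℓ (⟨0, hℓ⟩ : Fin ℓ)) ^ bexp ℓ *
          (vdm ℓ (Xv ℓ) * vdm ℓ (Yv ℓ) * vdm ℓ (Zv ℓ) * cauchyKernel ℓ)))
      = eta ℓ * kron ℓ lam mu nu := by
    rw [show ((eta ℓ : ℤ) : MvPowerSeries (KVar ℓ) ℤ) *
        ((Zv ℓ (⟨0, hℓ⟩ : Fin ℓ)) ^ bexp ℓ *
          (vdm ℓ (Xv ℓ) * vdm ℓ (Yv ℓ) * vdm ℓ (Zv ℓ) * cauchyKernel ℓ))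
        = (Zv ℓ (⟨0, hℓ⟩ : Fin ℓ)) ^ bexp ℓ *
            (((eta ℓ : ℤ) : MvPowerSeries (KVar ℓ) ℤ) *
              (vdm ℓ (Xv ℓ) * vdm ℓ (Yv ℓ) * vdm ℓ (Zv ℓ) * cauchyKernel ℓ)) from by ring]
    rw [hzmon, MvPowerSeries.coeff_monomial_mul, if_pos le_add_self, one_mul,
      add_tsub_cancel_right]
    rw [← zsmul_eq_mul, map_zsmul, kron]
    rfl
  have step2 : MvPowerSeries.coeff
      (kronExp ℓ lam mu nu + Finsupp.single (zvar (⟨0, hℓ⟩ : Fin ℓ)) (bexp ℓ))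
      ((matD (⟨0, hℓ⟩ : Fin ℓ)).det * vdm ℓ (Zv ℓ) * PK (⟨0, hℓ⟩ : Fin ℓ)) = 0 := by
    rw [expand_det_vdm (⟨0, hℓ⟩ : Fin ℓ), map_sum]
    refine Finset.sum_eq_zero fun ρ _ => ?_
    rw [map_sum]
    refine Finset.sum_eq_zero fun σ _ => ?_
    rw [map_zsmul, core_vanish hℓ lam mu nu n hlam hmu hlsum hmsum hnsum i hi ρ σ, smul_zero]
  have hmain := congrArg (MvPowerSeries.coeff
      (kronExp ℓ lam mu nu + Finsupp.single (zvar (⟨0, hℓ⟩ : Fin ℓ)) (bexp ℓ)))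
    (main_identity (ℓ := ℓ) (⟨0, hℓ⟩ : Fin ℓ))
  have hzero : eta ℓ * kron ℓ lam mu nu = 0 := by
    rw [← step1, hmain, step2]
  calc kron ℓ lam mu nu = (eta ℓ * eta ℓ) * kron ℓ lam mu nu := by rw [eta_sq, one_mul]
    _ = eta ℓ * (eta ℓ * kron ℓ lam mu nu) := by ring
    _ = 0 := by rw [hzero, mul_zero]
end

section
/- Let ℓ ≥ 2, let λ, μ be partitions of n with at most ℓ parts, and let π = (π_1, …, π_{ℓ−1}) be a partition with at most ℓ−1 parts and size |π| = t ≤ n. Suppose |λ_i − μ_i| > t for some index i with 1 ≤ i ≤ ℓ. Then g(λ,μ,η) = 0 for every partition η of n with at most ℓ parts such that η/π is a horizontal strip, i.e. such that η_j ≥ π_j for all 1 ≤ j ≤ ℓ−1 and η_{j+1} ≤ π_j for all 1 ≤ j ≤ ℓ−1. -/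
open Finset

section Aux
open MvPowerSeries

-- helper L0
lemma exists_coeff_ne_zero_of_prod {ι σ : Type*} [DecidableEq ι] [DecidableEq σ]
    (f : ι → MvPowerSeries σ ℤ) (s : Finset ι) (d : σ →₀ ℕ)
    (h : MvPowerSeries.coeff d (∏ j ∈ s, f j) ≠ 0) :
    ∃ l : ι →₀ (σ →₀ ℕ), (∑ i ∈ s, l i) = d ∧ ∀ i ∈ s, MvPowerSeries.coeff (l i) (f i) ≠ 0 := by
  rw [MvPowerSeries.coeff_prod] at h
  obtain ⟨l, hl, hne⟩ := Finset.exists_ne_zero_of_sum_ne_zero h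
  refine ⟨l, (Finset.mem_finsuppAntidiag.mp hl).1, fun i hi hz => hne ?_⟩
  exact Finset.prod_eq_zero hi hz

-- weight
def fwt {σ : Type*} (g : σ →₀ ℕ) : ℕ := g.sum fun _ n => n

lemma fwt_add {σ : Type*} (a b : σ →₀ ℕ) : fwt (a + b) = fwt a + fwt b := by
  unfold fwt
  exact Finsupp.sum_add_index' (fun _ => rfl) (fun _ _ _ => rfl)

lemma fwt_pos {σ : Type*} (a : σ →₀ ℕ) (ha : a ≠ 0) : 0 < fwt a := by
  rcases Nat.eq_zero_or_pos (fwt a) with h | h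
  · exfalso; apply ha
    ext s
    by_cases hs : s ∈ a.support
    · have : a s ≤ fwt a := Finset.single_le_sum (f := fun s => a s) (fun _ _ => Nat.zero_le _) hs
      simp only [Finsupp.coe_zero, Pi.zero_apply]; omega
    · simpa [Finsupp.notMem_support_iff] using hs
  · exact h

-- L1 : geometric series support
lemma geom_support {σ : Type*} [DecidableEq σ] (mv : σ →₀ ℕ) (hm : mv ≠ 0) (g : σ →₀ ℕ)
    (h : MvPowerSeries.coeff g (MvPowerSeries.invOfUnit (1 - MvPowerSeries.monomial mv (1:ℤ)) 1) ≠ 0) :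
    ∃ c : ℕ, g = c • mv := by
  set G := MvPowerSeries.invOfUnit (1 - MvPowerSeries.monomial mv (1:ℤ)) 1 with hG
  have hcc : MvPowerSeries.constantCoeff (1 - MvPowerSeries.monomial mv (1:ℤ)) = ((1 : ℤˣ) : ℤ) := by
    rw [map_sub, map_one]
    have : MvPowerSeries.constantCoeff (MvPowerSeries.monomial mv (1:ℤ)) = 0 := by
      rw [← MvPowerSeries.coeff_zero_eq_constantCoeff_apply, MvPowerSeries.coeff_monomial,
        if_neg (by simpa using (Ne.symm hm))]
    rw [this]; simp
  have hunit : (1 - MvPowerSeries.monomial mv (1:ℤ)) * G = 1 :=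
    MvPowerSeries.mul_invOfUnit _ 1 hcc
  have hrec : G = 1 + MvPowerSeries.monomial mv (1:ℤ) * G := by linear_combination hunit
  suffices H : ∀ N g, fwt g ≤ N → MvPowerSeries.coeff g G ≠ 0 → ∃ c : ℕ, g = c • mv by
    exact H (fwt g) g le_rfl h
  intro N
  induction N with
  | zero =>
    intro g hwt hg
    refine ⟨0, ?_⟩
    have : fwt g = 0 := Nat.le_zero.mp hwt
    have hg0 : g = 0 := by
      by_contra hc
      have := fwt_pos g hc; omega
    simp [hg0]
  | succ N ih =>
    intro g hwt hg
    by_cases hg0 : g = 0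
    · exact ⟨0, by simp [hg0]⟩
    rw [hrec, map_add] at hg
    rw [MvPowerSeries.coeff_one, if_neg hg0, zero_add, MvPowerSeries.coeff_monomial_mul] at hg
    split_ifs at hg with hle
    · rw [one_mul] at hg
      have hwt' : fwt (g - mv) ≤ N := by
        have h1 : (g - mv) + mv = g := tsub_add_cancel_of_le hle
        have h2 : fwt (g - mv) + fwt mv = fwt g := by rw [← fwt_add, h1]
        have := fwt_pos mv hm; omega
      obtain ⟨c, hc⟩ := ih (g - mv) hwt' hg
      exact ⟨c + 1, by rw [add_smul, one_smul, ← hc, tsub_add_cancel_of_le hle]⟩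
    · exact absurd rfl hg

section Esym
variable {ι A : Type*} [CommRing A] [DecidableEq ι]

noncomputable def esym (s : Finset ι) (y : ι → A) (m : ℕ) : A :=
  ∑ T ∈ s.powersetCard m, ∏ j ∈ T, y j

lemma prod_linear (s : Finset ι) (y : ι → A) (a b : A) :
    ∏ j ∈ s, (a + b * y j) = ∑ m ∈ range (s.card + 1), a ^ (s.card - m) * b ^ m * esym s y m := by
  have : ∀ j, a + b * y j = b * y j + a := fun j => add_comm _ _
  simp_rw [this]
  rw [Finset.prod_add, Finset.sum_powerset]
  refine Finset.sum_congr rfl fun m hm => ?_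
  unfold esym
  rw [Finset.mul_sum]
  refine Finset.sum_congr rfl fun T hT => ?_
  obtain ⟨hTs, hTc⟩ := Finset.mem_powersetCard.mp hT
  rw [Finset.prod_mul_distrib, Finset.prod_const, Finset.prod_const, Finset.card_sdiff_of_subset hTs, hTc]
  ring

lemma prod_one_sub (s : Finset ι) (y : ι → A) (w : A) :
    ∏ j ∈ s, (1 - w * y j) = ∑ m ∈ range (s.card + 1), (-1 : A) ^ m * w ^ m * esym s y m := by
  have h := prod_linear s y 1 (-w)
  simp_rw [sub_eq_add_neg, neg_mul_eq_neg_mul] at *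
  rw [h]
  refine Finset.sum_congr rfl fun m hm => ?_
  rw [neg_pow]
  ring

lemma prod_c_sub (s : Finset ι) (y : ι → A) (c : A) :
    ∏ j ∈ s, (c - y j) = ∑ m ∈ range (s.card + 1), (-1 : A) ^ m * esym s y m * c ^ (s.card - m) := by
  have h := prod_linear s y c (-1)
  simp_rw [neg_one_mul, ← sub_eq_add_neg] at h
  rw [h]
  refine Finset.sum_congr rfl fun m hm => ?_
  ring

end Esym

noncomputable def lcount (ℓ : ℕ) : ℕ := ∑ i : Fin ℓ, ((ℓ - 1) - (i : ℕ))

noncomputable def sgn1 (ℓ : ℕ) : ℤ :=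
  ∏ i : Fin ℓ, ∏ j : Fin ℓ, if i < j then (-1) else 1

section CauchyGeneric
variable {A : Type*} [CommRing A]

lemma prod_ite_mul {ℓ : ℕ} (c : Fin ℓ → Fin ℓ → Prop) [DecidablePred fun p : Fin ℓ × Fin ℓ => c p.1 p.2]
    [∀ i j, Decidable (c i j)] (f g : Fin ℓ → Fin ℓ → A) :
    ∏ i, ∏ j, (if c i j then f i j * g i j else 1) =
      (∏ i, ∏ j, if c i j then f i j else 1) * (∏ i, ∏ j, if c i j then g i j else 1) := by
  rw [← Finset.prod_mul_distrib]
  refine Finset.prod_congr rfl fun i _ => ?_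
  rw [← Finset.prod_mul_distrib]
  refine Finset.prod_congr rfl fun j _ => ?_
  split_ifs <;> simp

lemma sgn1_cast {ℓ : ℕ} : ((sgn1 ℓ : ℤ) : A) = ∏ i : Fin ℓ, ∏ j : Fin ℓ, if i < j then (-1 : A) else 1 := by
  unfold sgn1
  push_cast [apply_ite (fun r : ℤ => (r : A))]
  rfl

lemma sgn1_sq {ℓ : ℕ} : (sgn1 ℓ) * sgn1 ℓ = 1 := by
  unfold sgn1
  rw [← prod_ite_mul]
  have : ∀ i j : Fin ℓ, (if i < j then (-1 : ℤ) * -1 else 1) = 1 := by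
    intro i j; split_ifs <;> norm_num
  simp_rw [this]
  simp

lemma vand_eq {ℓ : ℕ} (v : Fin ℓ → A) :
    Matrix.det (Matrix.vandermonde v) =
      ((sgn1 ℓ : ℤ) : A) * ∏ i, ∏ j, (if i < j then v i - v j else 1) := by
  rw [Matrix.det_vandermonde, sgn1_cast, ← prod_ite_mul]
  have h1 : ∀ i : Fin ℓ, ∏ j ∈ Ioi i, (v j - v i) = ∏ j, (if i < j then v j - v i else 1) := by
    intro i
    rw [← Finset.prod_filter]
    congr 1
    ext j
    simp [Finset.mem_filter, Finset.mem_Ioi]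
  simp_rw [h1]
  refine Finset.prod_congr rfl fun i _ => Finset.prod_congr rfl fun j _ => ?_
  split_ifs <;> ring

lemma sum_fin_val (ℓ : ℕ) : ∑ m : Fin ℓ, (m : ℕ) = lcount ℓ := by
  unfold lcount
  rw [Fin.sum_univ_eq_sum_range (fun i => i) ℓ, Fin.sum_univ_eq_sum_range (fun i => ℓ - 1 - i) ℓ]
  exact (Finset.sum_range_reflect (fun i => i) ℓ).symm

open Matrix in
lemma cauchy_det {A : Type*} [CommRing A] [IsDomain A] (ℓ : ℕ) (hℓ : 0 < ℓ)
    (x y : Fin ℓ → A) (z : A)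
    (hy : (∏ i : Fin ℓ, ∏ j : Fin ℓ, if i < j then y i - y j else 1) ≠ 0) :
    ∃ ε : ℤ, ε * ε = 1 ∧
      ε • (z ^ lcount ℓ * (∏ i, ∏ j, if i < j then x i - x j else 1) *
          (∏ i, ∏ j, if i < j then y i - y j else 1)) =
      ∑ ω : Equiv.Perm (Fin ℓ), ((Equiv.Perm.sign ω : ℤ)) •
        ∏ i, ∏ j ∈ univ.erase (ω i), (1 - x i * y j * z) := by
  classical
  set Δx : A := ∏ i, ∏ j, (if i < j then x i - x j else 1) with hΔx
  set Δy : A := ∏ i, ∏ j, (if i < j then y i - y j else 1) with hΔy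
  set s1 : A := ((sgn1 ℓ : ℤ) : A) with hs1def
  set sr : A := (((Equiv.Perm.sign (Fin.revPerm : Equiv.Perm (Fin ℓ)) : ℤˣ) : ℤ) : A) with hsrdef
  have hs1sq : s1 * s1 = 1 := by
    rw [hs1def, ← Int.cast_mul, sgn1_sq]; norm_num
  have hsrsq : sr * sr = 1 := by
    rw [hsrdef, ← Int.cast_mul, ← Units.val_mul, Int.units_mul_self]; norm_num
  have hl : ∀ j : Fin ℓ, (univ.erase j).card = ℓ - 1 := fun j => by
    rw [Finset.card_erase_of_mem (mem_univ j), Finset.card_univ, Fintype.card_fin]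
  have hl1 : ℓ - 1 + 1 = ℓ := Nat.succ_pred_eq_of_pos hℓ
  set Vm : Matrix (Fin ℓ) (Fin ℓ) A := Matrix.of (fun i m => (x i * z) ^ (m : ℕ)) with hVm
  set Dm : Matrix (Fin ℓ) (Fin ℓ) A :=
    Matrix.of (fun j m => (-1 : A) ^ (m : ℕ) * esym (univ.erase j) y (m : ℕ)) with hDm
  set Bm : Matrix (Fin ℓ) (Fin ℓ) A :=
    Matrix.of (fun i j => ∏ j' ∈ univ.erase j, (1 - x i * y j' * z)) with hBm
  set Gm : Matrix (Fin ℓ) (Fin ℓ) A := Matrix.of (fun m j => y j ^ (ℓ - 1 - (m : ℕ))) with hGm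
  -- step 1 : B = V * Dᵀ
  have hBVD : Bm = Vm * Dm.transpose := by
    ext i j
    rw [Matrix.mul_apply]
    simp only [hVm, hDm, hBm, Matrix.of_apply, Matrix.transpose_apply]
    have h := prod_one_sub (univ.erase j) y (x i * z)
    rw [hl j, hl1] at h
    have h2 : ∀ j' : Fin ℓ, (1 - x i * y j' * z) = (1 - (x i * z) * y j') := fun j' => by ring
    simp_rw [h2]
    rw [h, ← Fin.sum_univ_eq_sum_range (fun m => (-1:A)^m * (x i * z)^m * esym (univ.erase j) y m) ℓ]
    exact Finset.sum_congr rfl fun m _ => by ring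
  -- step 2 : det V
  have hdetV : Vm.det = z ^ lcount ℓ * (s1 * Δx) := by
    have h1 : Vm = Matrix.of (fun i m => (fun m : Fin ℓ => z ^ (m : ℕ)) m * (Matrix.vandermonde x) i m) := by
      rw [hVm]
      ext i m
      simp only [Matrix.of_apply, Matrix.vandermonde_apply]
      rw [mul_pow]
      ring
    rw [h1, Matrix.det_mul_row, vand_eq, Finset.prod_pow_eq_pow_sum, sum_fin_val]
  -- step 3 : D * G diagonal
  have hDG : Dm * Gm = Matrix.diagonal (fun j => ∏ j' ∈ univ.erase j, (y j - y j')) := by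
    ext j j''
    rw [Matrix.mul_apply]
    simp only [hDm, hGm, Matrix.of_apply]
    have h := prod_c_sub (univ.erase j) y (y j'')
    rw [hl j, hl1] at h
    have h3 : ∑ m : Fin ℓ, (-1:A) ^ (m:ℕ) * esym (univ.erase j) y (m:ℕ) * y j'' ^ (ℓ - 1 - (m:ℕ))
        = ∏ j' ∈ univ.erase j, (y j'' - y j') := by
      rw [h, ← Fin.sum_univ_eq_sum_range (fun m => (-1:A)^m * esym (univ.erase j) y m * y j'' ^ (ℓ-1-m)) ℓ]
    rw [h3]
    by_cases hjj : j = j''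
    · subst hjj
      rw [Matrix.diagonal_apply_eq]
    · rw [Matrix.diagonal_apply_ne _ hjj]
      refine Finset.prod_eq_zero (Finset.mem_erase.mpr ⟨Ne.symm hjj, mem_univ _⟩) ?_
      ring
  -- step 4 : det G
  have hdetG : Gm.det = sr * (s1 * Δy) := by
    have h1 : Gm = ((Matrix.vandermonde y).transpose).submatrix (Fin.revPerm : Equiv.Perm (Fin ℓ)) id := by
      rw [hGm]
      ext m j
      simp only [Matrix.of_apply, Matrix.submatrix_apply, Matrix.transpose_apply,
        Matrix.vandermonde_apply, id_eq]
      congr 1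
      rw [Fin.revPerm_apply, Fin.val_rev]
      omega
    rw [h1, Matrix.det_permute, Matrix.det_transpose, vand_eq]
  -- step 5 : Pi product
  have prod2_mul : ∀ f g : Fin ℓ → Fin ℓ → A,
      (∏ i, ∏ j, (f i j * g i j)) = (∏ i, ∏ j, f i j) * (∏ i, ∏ j, g i j) := by
    intro f g
    rw [← Finset.prod_mul_distrib]
    exact Finset.prod_congr rfl fun i _ => Finset.prod_mul_distrib
  have hPi : ∏ j : Fin ℓ, ∏ j' ∈ univ.erase j, (y j - y j') = Δy * (s1 * Δy) := by
    have herase : ∀ j : Fin ℓ, ∏ j' ∈ univ.erase j, (y j - y j')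
        = ∏ j', (if j' ≠ j then y j - y j' else 1) := by
      intro j
      rw [← Finset.filter_ne', Finset.prod_filter]
    have hsplit : ∀ j j' : Fin ℓ, (if j' ≠ j then y j - y j' else 1)
        = (if j < j' then y j - y j' else 1) * (if j' < j then y j - y j' else 1) := by
      intro j j'
      rcases lt_trichotomy j j' with h | h | h
      · rw [if_pos h.ne', if_pos h, if_neg (asymm h), mul_one]
      · rw [if_neg (by simp [h]), if_neg (by simp [h]), if_neg (by simp [h]), one_mul]
      · rw [if_pos h.ne, if_neg (asymm h), if_pos h, one_mul]
    calc ∏ j : Fin ℓ, ∏ j' ∈ univ.erase j, (y j - y j')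
        = ∏ j, ∏ j', ((if j < j' then y j - y j' else 1) * (if j' < j then y j - y j' else 1)) := by
          refine Finset.prod_congr rfl fun j _ => ?_
          rw [herase j]
          exact Finset.prod_congr rfl fun j' _ => hsplit j j'
      _ = Δy * ∏ j, ∏ j', (if j' < j then y j - y j' else 1) := by
          rw [prod2_mul]
      _ = Δy * ∏ j', ∏ j, (if j' < j then y j - y j' else 1) := by
          rw [Finset.prod_comm]
      _ = Δy * ∏ a, ∏ b, ((if a < b then (-1 : A) else 1) * (if a < b then y a - y b else 1)) := by
          congr 1
          refine Finset.prod_congr rfl fun a _ => Finset.prod_congr rfl fun b _ => ?_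
          split_ifs <;> ring
      _ = Δy * (s1 * Δy) := by
          rw [prod2_mul, hs1def, sgn1_cast]
  -- assemble
  have hdetB : Bm.det = Vm.det * Dm.det := by
    rw [hBVD, Matrix.det_mul, Matrix.det_transpose]
  have hD1 : Dm.det * Gm.det = ∏ j, ∏ j' ∈ univ.erase j, (y j - y j') := by
    rw [← Matrix.det_mul, hDG, Matrix.det_diagonal]
  have e0 : Dm.det * (sr * (s1 * Δy)) = Δy * (s1 * Δy) := by rw [← hdetG, hD1, hPi]
  have e1 : (Dm.det * (sr * s1)) * Δy = (s1 * Δy) * Δy := by linear_combination e0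
  have e2 : Dm.det * (sr * s1) = s1 * Δy := mul_right_cancel₀ hy e1
  have hdetD : Dm.det = sr * Δy := by
    have h4 : (sr * s1) * (sr * s1) = 1 := by
      calc (sr * s1) * (sr * s1) = (sr * sr) * (s1 * s1) := by ring
        _ = 1 := by rw [hsrsq, hs1sq, one_mul]
    calc Dm.det = (Dm.det * (sr * s1)) * (sr * s1) := by rw [mul_assoc, h4, mul_one]
      _ = (s1 * Δy) * (sr * s1) := by rw [e2]
      _ = sr * Δy * (s1 * s1) := by ring
      _ = sr * Δy := by rw [hs1sq, mul_one]
  have hsgnr : ((Equiv.Perm.sign (Fin.revPerm : Equiv.Perm (Fin ℓ)) : ℤˣ) : ℤ)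
      * ((Equiv.Perm.sign (Fin.revPerm : Equiv.Perm (Fin ℓ)) : ℤˣ) : ℤ) = 1 := by
    rw [← Units.val_mul, Int.units_mul_self, Units.val_one]
  refine ⟨sgn1 ℓ * ((Equiv.Perm.sign (Fin.revPerm : Equiv.Perm (Fin ℓ)) : ℤˣ) : ℤ), ?_, ?_⟩
  · have h1 := sgn1_sq (ℓ := ℓ)
    have h2 : (sgn1 ℓ * ((Equiv.Perm.sign (Fin.revPerm : Equiv.Perm (Fin ℓ)) : ℤˣ) : ℤ))
        * (sgn1 ℓ * ((Equiv.Perm.sign (Fin.revPerm : Equiv.Perm (Fin ℓ)) : ℤˣ) : ℤ))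
        = (sgn1 ℓ * sgn1 ℓ) * (((Equiv.Perm.sign (Fin.revPerm : Equiv.Perm (Fin ℓ)) : ℤˣ) : ℤ)
          * ((Equiv.Perm.sign (Fin.revPerm : Equiv.Perm (Fin ℓ)) : ℤˣ) : ℤ)) := by ring
    rw [h2, h1, hsgnr, mul_one]
  · have hεcast : (((sgn1 ℓ * ((Equiv.Perm.sign (Fin.revPerm : Equiv.Perm (Fin ℓ)) : ℤˣ) : ℤ)) : ℤ) : A)
        = s1 * sr := by push_cast [hs1def, hsrdef]; ring
    rw [zsmul_eq_mul, hεcast]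
    have hdetBt : Bm.det = ∑ ω : Equiv.Perm (Fin ℓ), ((Equiv.Perm.sign ω : ℤ)) • ∏ i, Bm i (ω i) := by
      rw [← Matrix.det_transpose, Matrix.det_apply]
      refine Finset.sum_congr rfl fun ω _ => ?_
      rw [Units.smul_def]
      congr 1
    have hfin : s1 * sr * (z ^ lcount ℓ * Δx * Δy) = Bm.det := by
      rw [hdetB, hdetV, hdetD]
      ring
    rw [hfin, hdetBt]
    rfl

end CauchyGeneric

open MvPowerSeries in
lemma cauchyPS (m : ℕ) : ∃ ε : ℤ, ε * ε = 1 ∧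
    ε • ((Zv (m+1) 0) ^ (lcount (m+1)) * vdm (m+1) (Xv (m+1)) * vdm (m+1) (Yv (m+1))) =
    ∑ ω : Equiv.Perm (Fin (m+1)), ((Equiv.Perm.sign ω : ℤ)) •
      ∏ i, ∏ j ∈ univ.erase (ω i), (1 - Xv (m+1) i * Yv (m+1) j * Zv (m+1) 0) := by
  classical
  have hy : (∏ i : Fin (m+1), ∏ j : Fin (m+1),
      if i < j then (MvPolynomial.X (Sum.inr (Sum.inl i)) : MvPolynomial (KVar (m+1)) ℤ)
        - MvPolynomial.X (Sum.inr (Sum.inl j)) else 1) ≠ 0 := by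
    rw [Finset.prod_ne_zero_iff]
    intro i _
    rw [Finset.prod_ne_zero_iff]
    intro j _
    split_ifs with hij
    · rw [sub_ne_zero]
      intro hc
      have := MvPolynomial.X_injective hc
      simp only [Sum.inr.injEq, Sum.inl.injEq] at this
      exact absurd this (ne_of_lt hij)
    · exact one_ne_zero
  obtain ⟨ε, hε, hid⟩ := cauchy_det (A := MvPolynomial (KVar (m+1)) ℤ) (m+1) (Nat.succ_pos m)
    (fun i => MvPolynomial.X (Sum.inl i)) (fun j => MvPolynomial.X (Sum.inr (Sum.inl j)))
    (MvPolynomial.X (Sum.inr (Sum.inr 0))) hy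
  refine ⟨ε, hε, ?_⟩
  have hmap := congrArg (MvPolynomial.coeToMvPowerSeries.ringHom (σ := KVar (m+1)) (R := ℤ)) hid
  simp only [map_zsmul, map_mul, map_pow, map_sum, map_prod, map_sub, map_one,
    apply_ite (MvPolynomial.coeToMvPowerSeries.ringHom (σ := KVar (m+1)) (R := ℤ)),
    MvPolynomial.coeToMvPowerSeries.ringHom_apply, MvPolynomial.coe_X] at hmap
  unfold vdm Xv Yv Zv
  exact hmap

section Struct
open MvPowerSeries

lemma coeff_X_sub_X {σ : Type*} [DecidableEq σ] (a b : σ) (g : σ →₀ ℕ)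
    (h : MvPowerSeries.coeff g ((MvPowerSeries.X a : MvPowerSeries σ ℤ) - MvPowerSeries.X b) ≠ 0) :
    g = Finsupp.single a 1 ∨ g = Finsupp.single b 1 := by
  by_contra hc
  push_neg at hc
  apply h
  rw [MvPowerSeries.X_def, MvPowerSeries.X_def, map_sub, MvPowerSeries.coeff_monomial,
    MvPowerSeries.coeff_monomial, if_neg hc.1, if_neg hc.2, sub_zero]

lemma coeff_one_ne {σ : Type*} (g : σ →₀ ℕ)
    (h : MvPowerSeries.coeff g (1 : MvPowerSeries σ ℤ) ≠ 0) : g = 0 := by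
  by_contra hc
  apply h
  classical
  rw [MvPowerSeries.coeff_one, if_neg hc]

variable (m : ℕ)

def xvr (i : Fin (m+1)) : KVar (m+1) := Sum.inl i
def yvr (j : Fin (m+1)) : KVar (m+1) := Sum.inr (Sum.inl j)
def zvr (k : Fin (m+1)) : KVar (m+1) := Sum.inr (Sum.inr k)

noncomputable def mval (i j k : Fin (m+1)) : KVar (m+1) →₀ ℕ :=
  Finsupp.single (xvr m i) 1 + Finsupp.single (yvr m j) 1 + Finsupp.single (zvr m k) 1

lemma mval_apply_x (i j k i' : Fin (m+1)) :
    mval m i j k (xvr m i') = if i = i' then 1 else 0 := by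
  simp [mval, Finsupp.single_apply, xvr, yvr, zvr]

lemma mval_apply_y (i j k j' : Fin (m+1)) :
    mval m i j k (yvr m j') = if j = j' then 1 else 0 := by
  simp [mval, Finsupp.single_apply, xvr, yvr, zvr]

lemma mval_apply_z (i j k k' : Fin (m+1)) :
    mval m i j k (zvr m k') = if k = k' then 1 else 0 := by
  simp [mval, Finsupp.single_apply, xvr, yvr, zvr]

lemma mval_ne_zero (i j k : Fin (m+1)) : mval m i j k ≠ 0 := by
  intro hc
  have := congrArg (fun f : KVar (m+1) →₀ ℕ => f (xvr m i)) hc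
  simp only [mval_apply_x, if_pos rfl] at this
  simp at this

lemma XYZ_monomial (i j k : Fin (m+1)) :
    Xv (m+1) i * Yv (m+1) j * Zv (m+1) k = MvPowerSeries.monomial (mval m i j k) (1:ℤ) := by
  unfold Xv Yv Zv
  rw [MvPowerSeries.X_def, MvPowerSeries.X_def, MvPowerSeries.X_def,
    MvPowerSeries.monomial_mul_monomial, MvPowerSeries.monomial_mul_monomial]
  norm_num
  rfl

lemma vdm_supp (g : KVar (m+1) →₀ ℕ)
    (h : MvPowerSeries.coeff g (vdm (m+1) (Zv (m+1))) ≠ 0) :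
    (∀ i, g (xvr m i) = 0) ∧ (∀ j, g (yvr m j) = 0) ∧ g (zvr m 0) ≤ m := by
  classical
  unfold vdm at h
  rw [← Finset.prod_product'] at h
  obtain ⟨l, hsum, hne⟩ := exists_coeff_ne_zero_of_prod _ _ _ h
  have hstruct : ∀ p : Fin (m+1) × Fin (m+1), p ∈ univ ×ˢ univ →
      l p = 0 ∨ (p.1 < p.2 ∧ (l p = Finsupp.single (zvr m p.1) 1 ∨ l p = Finsupp.single (zvr m p.2) 1)) := by
    intro p hp
    have hc := hne p hp
    split_ifs at hc with hlt
    · right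
      exact ⟨hlt, coeff_X_sub_X _ _ _ hc⟩
    · left
      exact coeff_one_ne _ hc
  have hg : g = ∑ p ∈ univ ×ˢ univ, l p := hsum.symm
  have evalg : ∀ v : KVar (m+1), g v = ∑ p ∈ (univ ×ˢ univ : Finset (Fin (m+1) × Fin (m+1))), l p v := by
    intro v
    rw [hg, Finsupp.finset_sum_apply]
  refine ⟨?_, ?_, ?_⟩
  · intro i
    rw [evalg]
    refine Finset.sum_eq_zero fun p hp => ?_
    rcases hstruct p hp with h0 | ⟨hlt, hs | hs⟩
    · simp [h0]
    · simp [hs, Finsupp.single_apply, zvr, xvr]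
    · simp [hs, Finsupp.single_apply, zvr, xvr]
  · intro j
    rw [evalg]
    refine Finset.sum_eq_zero fun p hp => ?_
    rcases hstruct p hp with h0 | ⟨hlt, hs | hs⟩
    · simp [h0]
    · simp [hs, Finsupp.single_apply, zvr, yvr]
    · simp [hs, Finsupp.single_apply, zvr, yvr]
  · rw [evalg]
    have hb : ∀ p : Fin (m+1) × Fin (m+1), p ∈ univ ×ˢ univ →
        l p (zvr m 0) ≤ if p.1 = 0 ∧ 0 < p.2 then 1 else 0 := by
      intro p hp
      rcases hstruct p hp with h0 | ⟨hlt, hs | hs⟩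
      · simp [h0]
      · rw [hs, Finsupp.single_apply]
        by_cases h1 : p.1 = 0
        · have h2 : (0 : Fin (m+1)) < p.2 := h1 ▸ hlt
          simp [zvr, h1, h2]
        · rw [if_neg (fun hc => h1 (by simpa [zvr] using hc))]
          exact Nat.zero_le _
      · rw [hs, Finsupp.single_apply]
        have h2 : p.2 ≠ 0 := by
          intro hc
          rw [hc] at hlt
          exact Fin.not_lt_zero _ hlt
        rw [if_neg (fun hc => h2 (by simpa [zvr] using hc))]
        exact Nat.zero_le _
    calc ∑ p ∈ (univ ×ˢ univ : Finset (Fin (m+1) × Fin (m+1))), l p (zvr m 0)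
        ≤ ∑ p ∈ (univ ×ˢ univ : Finset (Fin (m+1) × Fin (m+1))), (if p.1 = 0 ∧ 0 < p.2 then 1 else 0) :=
          Finset.sum_le_sum hb
      _ = m := by
          rw [Finset.sum_product]
          have hrow : ∀ i : Fin (m+1), (∑ j : Fin (m+1), if i = 0 ∧ 0 < j then 1 else 0)
              = if i = 0 then (∑ j : Fin (m+1), if 0 < j then 1 else 0) else 0 := by
            intro i
            by_cases hi : i = 0
            · subst hi; simp
            · simp [hi]
          simp_rw [hrow]
          rw [Finset.sum_ite_eq' univ (0 : Fin (m+1)), if_pos (mem_univ _)]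
          have : ∀ j : Fin (m+1), (if 0 < j then (1:ℕ) else 0) = if j = 0 then 0 else 1 := by
            intro j
            rcases eq_or_ne j 0 with rfl | hj
            · simp
            · simp [hj, Fin.pos_iff_ne_zero.mpr hj]
          simp_rw [this]
          rw [← Finset.add_sum_erase _ _ (mem_univ (0 : Fin (m+1)))]
          simp only [if_pos rfl, zero_add]
          have : ∀ j ∈ (univ : Finset (Fin (m+1))).erase 0, (if j = 0 then (0:ℕ) else 1) = 1 := by
            intro j hj
            rw [if_neg (Finset.mem_erase.mp hj).1]
          rw [Finset.sum_congr rfl this, Finset.sum_const, Finset.card_erase_of_mem (mem_univ _),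
            Finset.card_univ, Fintype.card_fin]
          simp

end Struct

section Struct2
open MvPowerSeries

noncomputable def Wrest (m : ℕ) : MvPowerSeries (KVar (m+1)) ℤ :=
  ∏ p ∈ ((univ : Finset (Fin (m+1))) ×ˢ ((univ : Finset (Fin (m+1))) ×ˢ ((univ : Finset (Fin (m+1))).erase 0))),
    MvPowerSeries.invOfUnit (1 - Xv (m+1) p.1 * Yv (m+1) p.2.1 * Zv (m+1) p.2.2) 1

lemma kernel_split (m : ℕ) :
    cauchyKernel (m+1) =
      (∏ i, ∏ j, MvPowerSeries.invOfUnit (1 - Xv (m+1) i * Yv (m+1) j * Zv (m+1) 0) 1) * Wrest m := by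
  unfold cauchyKernel Wrest
  have h1 : ∀ i j : Fin (m+1), (∏ k, MvPowerSeries.invOfUnit (1 - Xv (m+1) i * Yv (m+1) j * Zv (m+1) k) 1)
      = MvPowerSeries.invOfUnit (1 - Xv (m+1) i * Yv (m+1) j * Zv (m+1) 0) 1 *
        ∏ k ∈ (univ : Finset (Fin (m+1))).erase 0,
          MvPowerSeries.invOfUnit (1 - Xv (m+1) i * Yv (m+1) j * Zv (m+1) k) 1 := by
    intro i j
    exact (Finset.mul_prod_erase univ _ (mem_univ 0)).symm
  simp_rw [h1, Finset.prod_mul_distrib]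
  congr 1
  simp only [Finset.prod_product]

lemma wrest_supp (m : ℕ) (g : KVar (m+1) →₀ ℕ)
    (h : MvPowerSeries.coeff g (Wrest m) ≠ 0) :
    g (zvr m 0) = 0 ∧ ∑ i, g (xvr m i) = ∑ j, g (yvr m j) := by
  classical
  unfold Wrest at h
  obtain ⟨l, hsum, hne⟩ := exists_coeff_ne_zero_of_prod _ _ _ h
  have hstruct : ∀ p ∈ ((univ : Finset (Fin (m+1))) ×ˢ ((univ : Finset (Fin (m+1))) ×ˢ ((univ : Finset (Fin (m+1))).erase 0))),
      ∃ c : ℕ, l p = c • mval m p.1 p.2.1 p.2.2 := by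
    intro p hp
    have hc := hne p hp
    rw [XYZ_monomial] at hc
    exact geom_support _ (mval_ne_zero m _ _ _) _ hc
  have evalg : ∀ v, g v = ∑ p ∈ ((univ : Finset (Fin (m+1))) ×ˢ ((univ : Finset (Fin (m+1))) ×ˢ ((univ : Finset (Fin (m+1))).erase 0))), l p v := by
    intro v
    rw [← hsum, Finsupp.finset_sum_apply]
  constructor
  · rw [evalg]
    refine Finset.sum_eq_zero fun p hp => ?_
    obtain ⟨c, hc⟩ := hstruct p hp
    have hk : p.2.2 ≠ 0 := by
      have := hp
      simp only [Finset.mem_product, Finset.mem_erase] at this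
      exact this.2.2.1
    rw [hc, Finsupp.smul_apply, mval_apply_z, if_neg hk, smul_zero]
  · have hswap : ∀ v : Fin (m+1) → KVar (m+1), ∑ i, g (v i) =
        ∑ p ∈ ((univ : Finset (Fin (m+1))) ×ˢ ((univ : Finset (Fin (m+1))) ×ˢ ((univ : Finset (Fin (m+1))).erase 0))), ∑ i, l p (v i) := by
      intro v
      simp_rw [evalg]
      rw [Finset.sum_comm]
    rw [hswap (xvr m), hswap (yvr m)]
    refine Finset.sum_congr rfl fun p hp => ?_
    obtain ⟨c, hc⟩ := hstruct p hp
    have hx : ∑ i, l p (xvr m i) = c := by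
      simp_rw [hc, Finsupp.smul_apply, mval_apply_x, smul_eq_mul, mul_ite, mul_one, mul_zero]
      rw [Finset.sum_ite_eq univ p.1 (fun _ => c), if_pos (mem_univ _)]
    have hy : ∑ j, l p (yvr m j) = c := by
      simp_rw [hc, Finsupp.smul_apply, mval_apply_y, smul_eq_mul, mul_ite, mul_one, mul_zero]
      rw [Finset.sum_ite_eq univ p.2.1 (fun _ => c), if_pos (mem_univ _)]
    rw [hx, hy]

lemma aomega_supp (m : ℕ) (ω : Equiv.Perm (Fin (m+1))) (g : KVar (m+1) →₀ ℕ)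
    (h : MvPowerSeries.coeff g
      (∏ i, MvPowerSeries.invOfUnit (1 - Xv (m+1) i * Yv (m+1) (ω i) * Zv (m+1) 0) 1) ≠ 0) :
    ∃ d : Fin (m+1) → ℕ, g = ∑ i, d i • mval m i (ω i) 0 := by
  classical
  obtain ⟨l, hsum, hne⟩ := exists_coeff_ne_zero_of_prod _ _ _ h
  have hstruct : ∀ i : Fin (m+1), ∃ c : ℕ, l i = c • mval m i (ω i) 0 := by
    intro i
    have hc := hne i (mem_univ i)
    rw [XYZ_monomial] at hc
    exact geom_support _ (mval_ne_zero m _ _ _) _ hc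
  choose d hd using hstruct
  refine ⟨d, ?_⟩
  rw [← hsum]
  exact Finset.sum_congr rfl fun i _ => hd i

end Struct2

section PerOmega
open MvPowerSeries

lemma pigeon {N : ℕ} (ω : Equiv.Perm (Fin N)) (A B : Fin N → ℤ) (t : ℤ)
    (hA : ∀ i j : Fin N, i < j → A j < A i) (hB : ∀ i j : Fin N, i < j → B j < B i)
    (h : ∀ i, |A i - B (ω i)| ≤ t) (i₀ : Fin N) (hgap : B i₀ + t < A i₀) : False := by
  have key : ∀ i, i ≤ i₀ → ω i < i₀ := by
    intro i hi
    by_contra hcon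
    push_neg at hcon
    have h1 : B (ω i) ≤ B i₀ := by
      rcases eq_or_lt_of_le hcon with he | hl
      · rw [← he]
      · exact le_of_lt (hB _ _ hl)
    have h2 : A i₀ ≤ A i := by
      rcases eq_or_lt_of_le hi with he | hl
      · rw [he]
      · exact le_of_lt (hA _ _ hl)
    have h4 := abs_le.mp (h i)
    omega
  have hmaps : ∀ i ∈ Finset.Iic i₀, ω i ∈ Finset.Iio i₀ := fun i hi =>
    Finset.mem_Iio.mpr (key i (Finset.mem_Iic.mp hi))
  have hcard := Finset.card_le_card_of_injOn ω hmaps ω.injective.injOn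
  rw [Fin.card_Iic, Fin.card_Iio] at hcard
  omega

lemma kronExp_apply_x (ℓ : ℕ) (lam mu nu : Fin ℓ → ℕ) (i : Fin ℓ) :
    kronExp ℓ lam mu nu (Sum.inl i) = lam i + (ℓ - 1 - (i : ℕ)) := by
  simp [kronExp, expVec3]

lemma kronExp_apply_y (ℓ : ℕ) (lam mu nu : Fin ℓ → ℕ) (j : Fin ℓ) :
    kronExp ℓ lam mu nu (Sum.inr (Sum.inl j)) = mu j + (ℓ - 1 - (j : ℕ)) := by
  simp [kronExp, expVec3]

lemma kronExp_apply_z (ℓ : ℕ) (lam mu nu : Fin ℓ → ℕ) (k : Fin ℓ) :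
    kronExp ℓ lam mu nu (Sum.inr (Sum.inr k)) = nu k + (ℓ - 1 - (k : ℕ)) := by
  simp [kronExp, expVec3]

lemma perOmega (m : ℕ) (lam mu η : Fin (m+1) → ℕ) (t : ℕ)
    (hlam : IsPartition lam) (hmu : IsPartition mu)
    (hηb : ∑ i, lam i ≤ η 0 + t) (hms : ∑ i, mu i = ∑ i, lam i)
    (i₀ : Fin (m+1)) (hgap : (t:ℤ) < |(lam i₀ : ℤ) - (mu i₀ : ℤ)|)
    (ω : Equiv.Perm (Fin (m+1))) :
    MvPowerSeries.coeff (kronExp (m+1) lam mu η + Finsupp.single (zvr m 0) (lcount (m+1)))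
      ((∏ i, MvPowerSeries.invOfUnit (1 - Xv (m+1) i * Yv (m+1) (ω i) * Zv (m+1) 0) 1) *
        (vdm (m+1) (Zv (m+1)) * Wrest m)) = 0 := by
  classical
  by_contra h
  rw [MvPowerSeries.coeff_mul] at h
  obtain ⟨p, hp, hne⟩ := Finset.exists_ne_zero_of_sum_ne_zero h
  have h1 := left_ne_zero_of_mul hne
  have h23 := right_ne_zero_of_mul hne
  rw [MvPowerSeries.coeff_mul] at h23
  obtain ⟨q, hq, hne2⟩ := Finset.exists_ne_zero_of_sum_ne_zero h23
  have h2 := left_ne_zero_of_mul hne2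
  have h3 := right_ne_zero_of_mul hne2
  obtain ⟨d, hd⟩ := aomega_supp m ω p.1 h1
  obtain ⟨hvx, hvy, hvz⟩ := vdm_supp m q.1 h2
  obtain ⟨hwz, hwxy⟩ := wrest_supp m q.2 h3
  have hKeq : p.1 + (q.1 + q.2) = kronExp (m+1) lam mu η + Finsupp.single (zvr m 0) (lcount (m+1)) := by
    have e2 := Finset.HasAntidiagonal.mem_antidiagonal.mp hq
    have e1 := Finset.HasAntidiagonal.mem_antidiagonal.mp hp
    rw [e2, e1]
  -- evaluations of p.1
  have hg1x : ∀ i, p.1 (xvr m i) = d i := by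
    intro i
    rw [hd, Finsupp.finset_sum_apply]
    simp_rw [Finsupp.smul_apply, mval_apply_x, smul_eq_mul, mul_ite, mul_one, mul_zero]
    rw [Finset.sum_ite_eq' univ i (fun i' => d i'), if_pos (mem_univ _)]
  have hg1y : ∀ i, p.1 (yvr m (ω i)) = d i := by
    intro i
    rw [hd, Finsupp.finset_sum_apply]
    simp_rw [Finsupp.smul_apply, mval_apply_y, smul_eq_mul, mul_ite, mul_one, mul_zero]
    have hcond : ∀ i' : Fin (m+1), (ω i' = ω i) = (i' = i) :=
      fun i' => propext ⟨fun hh => ω.injective hh, fun hh => congrArg ω hh⟩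
    simp_rw [hcond]
    rw [Finset.sum_ite_eq' univ i (fun i' => d i'), if_pos (mem_univ _)]
  have hg1z : p.1 (zvr m 0) = ∑ i, d i := by
    rw [hd, Finsupp.finset_sum_apply]
    refine Finset.sum_congr rfl fun i' _ => ?_
    rw [Finsupp.smul_apply, mval_apply_z, if_pos rfl, smul_eq_mul, mul_one]
  -- coordinate equations
  have happ : ∀ v : KVar (m+1), p.1 v + q.1 v + q.2 v
      = kronExp (m+1) lam mu η v + Finsupp.single (zvr m 0) (lcount (m+1)) v := by
    intro v
    have := congrArg (fun f : KVar (m+1) →₀ ℕ => f v) hKeq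
    simpa [add_assoc] using this
  have hKx : ∀ i : Fin (m+1), d i + q.2 (xvr m i) = lam i + (m - (i:ℕ)) := by
    intro i
    have h0 := happ (xvr m i)
    rw [hg1x, hvx] at h0
    simp only [xvr, zvr] at h0
    rw [kronExp_apply_x, Finsupp.single_apply, if_neg (by simp)] at h0
    simpa [xvr] using h0
  have hKy : ∀ i : Fin (m+1), d i + q.2 (yvr m (ω i)) = mu (ω i) + (m - ((ω i):ℕ)) := by
    intro i
    have h0 := happ (yvr m (ω i))
    rw [hg1y, hvy] at h0
    simp only [yvr, zvr] at h0
    rw [kronExp_apply_y, Finsupp.single_apply, if_neg (by simp)] at h0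
    simpa [yvr] using h0
  have hKz : (∑ i, d i) + q.1 (zvr m 0) = η 0 + m + lcount (m+1) := by
    have h0 := happ (zvr m 0)
    rw [hg1z, hwz] at h0
    have e1 : (kronExp (m+1) lam mu η) (zvr m 0) = η 0 + m := by
      simp only [zvr]
      rw [kronExp_apply_z]
      simp
    have e2 : (Finsupp.single (zvr m 0) (lcount (m+1))) (zvr m 0) = lcount (m+1) :=
      Finsupp.single_eq_same
    rw [e1, e2] at h0
    omega
  -- arithmetic
  set T := ∑ i, q.2 (xvr m i) with hT
  have hLc : ∑ i : Fin (m+1), (m - (i:ℕ)) = lcount (m+1) := by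
    unfold lcount
    exact Finset.sum_congr rfl fun i _ => by omega
  have hsumx : (∑ i, d i) + T = (∑ i, lam i) + lcount (m+1) := by
    rw [hT, ← Finset.sum_add_distrib, ← hLc, ← Finset.sum_add_distrib]
    exact Finset.sum_congr rfl fun i _ => hKx i
  have hTt : T ≤ t := by omega
  have hPle : ∀ i, q.2 (xvr m i) ≤ T :=
    fun i => Finset.single_le_sum (f := fun i => q.2 (xvr m i)) (fun _ _ => Nat.zero_le _) (mem_univ i)
  have hQle : ∀ j, q.2 (yvr m j) ≤ T := by
    intro j
    have : ∑ j, q.2 (yvr m j) = T := hwxy.symm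
    rw [← this]
    exact Finset.single_le_sum (f := fun j => q.2 (yvr m j)) (fun _ _ => Nat.zero_le _) (mem_univ j)
  set A : Fin (m+1) → ℤ := fun i => ((lam i : ℤ) + ((m : ℤ) - (i : ℕ))) with hA
  set B : Fin (m+1) → ℤ := fun j => ((mu j : ℤ) + ((m : ℤ) - (j : ℕ))) with hB
  have hAcast : ∀ i : Fin (m+1), A i = ((lam i + (m - (i:ℕ)) : ℕ) : ℤ) := by
    intro i
    have : (i : ℕ) ≤ m := Nat.lt_succ_iff.mp i.isLt
    rw [hA]
    push_cast [this]
    ring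
  have hBcast : ∀ j : Fin (m+1), B j = ((mu j + (m - (j:ℕ)) : ℕ) : ℤ) := by
    intro j
    have : (j : ℕ) ≤ m := Nat.lt_succ_iff.mp j.isLt
    rw [hB]
    push_cast [this]
    ring
  have habs : ∀ i, |A i - B (ω i)| ≤ (t : ℤ) := by
    intro i
    rw [hAcast, hBcast, abs_le]
    have e1 := hKx i
    have e2 := hKy i
    have e3 := hPle i
    have e4 := hQle (ω i)
    constructor <;> push_cast <;> omega
  have hAanti : ∀ i j : Fin (m+1), i < j → A j < A i := by
    intro i j hij
    have h5 : lam j ≤ lam i := hlam i j (le_of_lt hij)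
    have h6 : (j : ℕ) < m + 1 := j.isLt
    have h7 : (i : ℕ) < (j : ℕ) := hij
    simp only [hA]
    have : ((i:ℕ) : ℤ) < ((j:ℕ) : ℤ) := by exact_mod_cast h7
    have h8 : ((lam j : ℕ) : ℤ) ≤ ((lam i : ℕ) : ℤ) := by exact_mod_cast h5
    omega
  have hBanti : ∀ i j : Fin (m+1), i < j → B j < B i := by
    intro i j hij
    have h5 : mu j ≤ mu i := hmu i j (le_of_lt hij)
    have h7 : (i : ℕ) < (j : ℕ) := hij
    simp only [hB]
    have : ((i:ℕ) : ℤ) < ((j:ℕ) : ℤ) := by exact_mod_cast h7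
    have h8 : ((mu j : ℕ) : ℤ) ≤ ((mu i : ℕ) : ℤ) := by exact_mod_cast h5
    omega
  rcases le_or_gt (mu i₀ : ℤ) (lam i₀ : ℤ) with hcase | hcase
  · have hgap2 : B i₀ + t < A i₀ := by
      rw [abs_of_nonneg (by omega)] at hgap
      simp only [hA, hB]
      omega
    exact pigeon ω A B t hAanti hBanti habs i₀ hgap2
  · have habs2 : ∀ j, |B j - A (ω.symm j)| ≤ (t : ℤ) := by
      intro j
      have := habs (ω.symm j)
      rw [Equiv.apply_symm_apply] at this
      rw [abs_sub_comm] at this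
      exact this
    have hgap2 : A i₀ + t < B i₀ := by
      rw [abs_of_neg (by omega)] at hgap
      simp only [hA, hB]
      omega
    exact pigeon ω.symm B A t hBanti hAanti habs2 i₀ hgap2

end PerOmega

section Assemble
open MvPowerSeries

lemma const_one (m : ℕ) (i j k : Fin (m+1)) :
    MvPowerSeries.constantCoeff (1 - Xv (m+1) i * Yv (m+1) j * Zv (m+1) k)
      = ((1 : ℤˣ) : ℤ) := by
  rw [XYZ_monomial, map_sub, map_one]
  have h0 : MvPowerSeries.constantCoeff
      (MvPowerSeries.monomial (mval m i j k) (1:ℤ)) = 0 := by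
    rw [← MvPowerSeries.coeff_zero_eq_constantCoeff_apply, MvPowerSeries.coeff_monomial,
      if_neg (fun hc => (mval_ne_zero m i j k) hc.symm)]
  rw [h0]
  norm_num

theorem stmt1' (m n t : ℕ)
    (lam mu : Fin (m+1) → ℕ) (hlam : IsPartition lam) (hmu : IsPartition mu)
    (hlsum : ∑ i, lam i = n) (hmsum : ∑ i, mu i = n)
    (i₀ : Fin (m+1)) (hi : (t : ℤ) < |(lam i₀ : ℤ) - (mu i₀ : ℤ)|)
    (η : Fin (m+1) → ℕ) (hηsum : ∑ j, η j = n)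
    (hηb : n ≤ η 0 + t) :
    kron (m+1) lam mu η = 0 := by
  classical
  unfold kron
  obtain ⟨ε, hε, hid⟩ := cauchyPS m
  set Q : MvPowerSeries (KVar (m+1)) ℤ :=
    ∏ i, ∏ j, (1 - Xv (m+1) i * Yv (m+1) j * Zv (m+1) 0) with hQ
  set W0 : MvPowerSeries (KVar (m+1)) ℤ :=
    ∏ i, ∏ j, MvPowerSeries.invOfUnit (1 - Xv (m+1) i * Yv (m+1) j * Zv (m+1) 0) 1 with hW0
  have hQW0 : Q * W0 = 1 := by
    rw [hQ, hW0, ← Finset.prod_mul_distrib]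
    have : ∀ i : Fin (m+1), i ∈ univ →
        (∏ j, (1 - Xv (m+1) i * Yv (m+1) j * Zv (m+1) 0)) *
          (∏ j, MvPowerSeries.invOfUnit (1 - Xv (m+1) i * Yv (m+1) j * Zv (m+1) 0) 1) = 1 := by
      intro i _
      rw [← Finset.prod_mul_distrib]
      refine Finset.prod_eq_one fun j _ => ?_
      exact MvPowerSeries.mul_invOfUnit _ 1 (const_one m i j 0)
    rw [Finset.prod_congr rfl this, Finset.prod_const_one]
  have hPQ : ∀ ω : Equiv.Perm (Fin (m+1)),
      (∏ i, MvPowerSeries.invOfUnit (1 - Xv (m+1) i * Yv (m+1) (ω i) * Zv (m+1) 0) 1) * Q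
      = ∏ i, ∏ j ∈ univ.erase (ω i), (1 - Xv (m+1) i * Yv (m+1) j * Zv (m+1) 0) := by
    intro ω
    rw [hQ, ← Finset.prod_mul_distrib]
    refine Finset.prod_congr rfl fun i _ => ?_
    rw [← Finset.mul_prod_erase univ _ (mem_univ (ω i)), ← mul_assoc,
      mul_comm (MvPowerSeries.invOfUnit (1 - Xv (m+1) i * Yv (m+1) (ω i) * Zv (m+1) 0) 1),
      MvPowerSeries.mul_invOfUnit _ 1 (const_one m i (ω i) 0), one_mul]
  have hBW : ∀ ω : Equiv.Perm (Fin (m+1)),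
      (∏ i, ∏ j ∈ univ.erase (ω i), (1 - Xv (m+1) i * Yv (m+1) j * Zv (m+1) 0)) * W0
      = ∏ i, MvPowerSeries.invOfUnit (1 - Xv (m+1) i * Yv (m+1) (ω i) * Zv (m+1) 0) 1 := by
    intro ω
    rw [← hPQ ω, mul_assoc, hQW0, mul_one]
  have hstar : ε • ((Zv (m+1) 0)^(lcount (m+1)) * vdm (m+1) (Xv (m+1)) * vdm (m+1) (Yv (m+1)) * W0)
      = ∑ ω : Equiv.Perm (Fin (m+1)), ((Equiv.Perm.sign ω : ℤ)) •
          (∏ i, MvPowerSeries.invOfUnit (1 - Xv (m+1) i * Yv (m+1) (ω i) * Zv (m+1) 0) 1) := by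
    have h1 := congrArg (fun F => F * W0) hid
    simp only [smul_mul_assoc, Finset.sum_mul] at h1
    rw [h1]
    exact Finset.sum_congr rfl fun ω _ => by rw [hBW ω]
  -- multiply by C
  set C : MvPowerSeries (KVar (m+1)) ℤ := vdm (m+1) (Zv (m+1)) * Wrest m with hC
  have hSrw : (Zv (m+1) 0)^(lcount (m+1)) *
      (vdm (m+1) (Xv (m+1)) * vdm (m+1) (Yv (m+1)) * vdm (m+1) (Zv (m+1)) * cauchyKernel (m+1))
      = ((Zv (m+1) 0)^(lcount (m+1)) * vdm (m+1) (Xv (m+1)) * vdm (m+1) (Yv (m+1)) * W0) * C := by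
    rw [kernel_split m, hC, hW0]
    ring
  have hmain : ε • ((Zv (m+1) 0)^(lcount (m+1)) *
      (vdm (m+1) (Xv (m+1)) * vdm (m+1) (Yv (m+1)) * vdm (m+1) (Zv (m+1)) * cauchyKernel (m+1)))
      = ∑ ω : Equiv.Perm (Fin (m+1)), ((Equiv.Perm.sign ω : ℤ)) •
          ((∏ i, MvPowerSeries.invOfUnit (1 - Xv (m+1) i * Yv (m+1) (ω i) * Zv (m+1) 0) 1) * C) := by
    rw [hSrw, ← smul_mul_assoc, hstar, Finset.sum_mul]
    exact Finset.sum_congr rfl fun ω _ => (smul_mul_assoc _ _ _)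
  -- take coefficients
  set K' : KVar (m+1) →₀ ℕ :=
    kronExp (m+1) lam mu η + Finsupp.single (zvr m 0) (lcount (m+1)) with hK'
  have hcoeffL : MvPowerSeries.coeff K' ((Zv (m+1) 0)^(lcount (m+1)) *
      (vdm (m+1) (Xv (m+1)) * vdm (m+1) (Yv (m+1)) * vdm (m+1) (Zv (m+1)) * cauchyKernel (m+1)))
      = MvPowerSeries.coeff (kronExp (m+1) lam mu η)
        (vdm (m+1) (Xv (m+1)) * vdm (m+1) (Yv (m+1)) * vdm (m+1) (Zv (m+1)) * cauchyKernel (m+1)) := by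
    have hz : (Zv (m+1) 0)^(lcount (m+1))
        = MvPowerSeries.monomial (Finsupp.single (zvr m 0) (lcount (m+1))) (1:ℤ) := by
      unfold Zv
      rw [MvPowerSeries.X_pow_eq]
      rfl
    rw [hz, hK', add_comm (kronExp (m+1) lam mu η), MvPowerSeries.coeff_add_monomial_mul, one_mul]
  have hηb2 : ∑ i, lam i ≤ η 0 + t := by rw [hlsum]; exact hηb
  have hms : ∑ i, mu i = ∑ i, lam i := by rw [hlsum, hmsum]
  have hcoeffR : ∀ ω : Equiv.Perm (Fin (m+1)), MvPowerSeries.coeff K'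
      ((∏ i, MvPowerSeries.invOfUnit (1 - Xv (m+1) i * Yv (m+1) (ω i) * Zv (m+1) 0) 1) * C) = 0 := by
    intro ω
    rw [hC, hK']
    exact perOmega m lam mu η t hlam hmu hηb2 hms i₀ hi ω
  have hfinal : ε * MvPowerSeries.coeff (kronExp (m+1) lam mu η)
      (vdm (m+1) (Xv (m+1)) * vdm (m+1) (Yv (m+1)) * vdm (m+1) (Zv (m+1)) * cauchyKernel (m+1)) = 0 := by
    rw [← smul_eq_mul, ← hcoeffL, ← map_smul, hmain, map_sum]
    refine Finset.sum_eq_zero fun ω _ => ?_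
    rw [map_smul, hcoeffR ω, smul_zero]
  have := congrArg (fun r => ε * r) hfinal
  simp only [mul_zero] at this
  rw [← mul_assoc, hε, one_mul] at this
  exact this

end Assemble

end Aux

/-- if `|λ_i - μ_i| > t = |π|` for some `i`, then `g(λ,μ,η) = 0`
for every partition `η` of `n` such that `η/π` is a horizontal strip. -/
theorem stmt1 (ℓ n t : ℕ) (hℓ : 2 ≤ ℓ)
    (lam mu : Fin ℓ → ℕ) (hlam : IsPartition lam) (hmu : IsPartition mu)
    (hlsum : ∑ i, lam i = n) (hmsum : ∑ i, mu i = n)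
    (π : Fin (ℓ - 1) → ℕ) (hπ : IsPartition π) (hπsum : ∑ j, π j = t) (htn : t ≤ n)
    (i : Fin ℓ) (hi : (t : ℤ) < |(lam i : ℤ) - (mu i : ℤ)|)
    (η : Fin ℓ → ℕ) (hη : IsPartition η) (hηsum : ∑ j, η j = n)
    (hstrip₁ : ∀ j : Fin (ℓ - 1), π j ≤ η ⟨(j : ℕ), lt_of_lt_of_le j.isLt (Nat.sub_le ℓ 1)⟩)
    (hstrip₂ : ∀ j : Fin (ℓ - 1), η ⟨(j : ℕ) + 1, by have := j.isLt; omega⟩ ≤ π j) :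
    kron ℓ lam mu η = 0 := by
  obtain ⟨m, rfl⟩ : ∃ m, ℓ = m + 1 := ⟨ℓ - 1, by omega⟩
  have hb : ∀ j : Fin m, η (Fin.succ j) ≤ π j := fun j => hstrip₂ j
  have hsum : ∑ j : Fin (m+1), η j = η 0 + ∑ j : Fin m, η (Fin.succ j) := Fin.sum_univ_succ η
  have hπs : (∑ j : Fin m, π j) = t := hπsum
  have hηb : n ≤ η 0 + t := by
    have h2 : ∑ j : Fin m, η (Fin.succ j) ≤ ∑ j : Fin m, π j :=
      Finset.sum_le_sum (fun j _ => hb j)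
    omega
  exact stmt1' m n t lam mu hlam hmu hlsum hmsum i hi η hηsum hηb
end
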